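/- arXiv:1803.05652 — 6 statements merged into one kernel-verified Lean document; each statement's English description precedes it below -/
import Mathlib

section
/- Let n ≥ 1 be an integer, let S ⊆ [n] = {1, …, n}, and let 0 < α < 1. Then the number of nodes v ∈ [n] ∖ S that are α-good under S is at least n − |S|·(2 − α)/α. -/
/-- A node `v` is `α`-good under `S`: `v ∉ S` and for every radius `r ≥ 1`,
each of the intervals `[v-r+1, v]` and `[v, v+r-1]` contains at most `α·r`
elements of `S` (intervals clipped within the positive integers). -/
def AlphaGood (S : Finset ℕ) (α : ℝ) (v : ℕ) : Prop :=
  v ∉ S ∧ ∀ r : ℕ, 1 ≤ r →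
    ((Finset.Icc (v - r + 1) v ∩ S).card : ℝ) ≤ α * r ∧
    ((Finset.Icc v (v + r - 1) ∩ S).card : ℝ) ≤ α * r

open Finset
open scoped Classical

private lemma badR_card (n : ℕ) (α : ℝ) (hα0 : 0 < α) (S : Finset ℕ) :
    ((((Finset.Icc 1 n)).filter
        (fun v => ∃ r : ℕ, 1 ≤ r ∧
          α * r < ((Finset.Icc v (v + r - 1) ∩ S).card : ℝ))).card : ℝ)
      ≤ S.card / α := by
  induction S using Finset.strongInduction with
  | _ S ih =>
    set BR := (Finset.Icc 1 n).filter
      (fun v => ∃ r : ℕ, 1 ≤ r ∧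
        α * r < ((Finset.Icc v (v + r - 1) ∩ S).card : ℝ)) with hBRdef
    by_cases hne : BR.Nonempty
    · set a := BR.min' hne with hadef
      have haBR : a ∈ BR := BR.min'_mem hne
      rw [hBRdef, mem_filter] at haBR
      obtain ⟨haI, r, hr1, hrS⟩ := haBR
      set S' := S.filter (fun s => a + r - 1 < s) with hS'def
      -- the dense interval contains an element of S
      have hpos : 0 < ((Finset.Icc a (a + r - 1) ∩ S).card : ℝ) := by
        have : (0:ℝ) < α * r := by positivity
        linarith
      have hInonempty : (Finset.Icc a (a + r - 1) ∩ S).Nonempty := by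
        rw [← Finset.card_pos]
        exact_mod_cast hpos
      obtain ⟨s₀, hs₀⟩ := hInonempty
      rw [mem_inter, mem_Icc] at hs₀
      have hssub : S' ⊂ S := by
        constructor
        · exact Finset.filter_subset _ _
        · intro hsub
          have := hsub hs₀.2
          rw [hS'def, mem_filter] at this
          omega
      -- bad points beyond the interval are bad for S'
      have hcover : BR ⊆ Finset.Icc a (a + r - 1) ∪
          ((Finset.Icc 1 n).filter
            (fun v => ∃ r' : ℕ, 1 ≤ r' ∧
              α * r' < ((Finset.Icc v (v + r' - 1) ∩ S').card : ℝ))) := by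
        intro v hv
        have hav : a ≤ v := BR.min'_le v hv
        by_cases hvle : v ≤ a + r - 1
        · exact Finset.mem_union_left _ (by rw [mem_Icc]; exact ⟨hav, hvle⟩)
        · push_neg at hvle
          rw [hBRdef, mem_filter] at hv
          obtain ⟨hvI, r', hr'1, hr'S⟩ := hv
          refine Finset.mem_union_right _ (mem_filter.mpr ⟨hvI, r', hr'1, ?_⟩)
          have heq : Finset.Icc v (v + r' - 1) ∩ S' = Finset.Icc v (v + r' - 1) ∩ S := by
            ext s
            simp only [mem_inter, mem_Icc, hS'def, mem_filter]
            constructor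
            · rintro ⟨hs1, hs2, _⟩; exact ⟨hs1, hs2⟩
            · rintro ⟨hs1, hs2⟩; exact ⟨hs1, hs2, by omega⟩
          rw [heq]; exact hr'S
      have hIcard : (Finset.Icc a (a + r - 1)).card = r := by
        rw [Nat.card_Icc]; omega
      have hcard : BR.card ≤ r +
          ((Finset.Icc 1 n).filter
            (fun v => ∃ r' : ℕ, 1 ≤ r' ∧
              α * r' < ((Finset.Icc v (v + r' - 1) ∩ S').card : ℝ))).card := by
        calc BR.card ≤ _ := Finset.card_le_card hcover
        _ ≤ (Finset.Icc a (a + r - 1)).card + _ := Finset.card_union_le _ _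
        _ = r + _ := by rw [hIcard]
      have hIH := ih S' hssub
      -- card S' ≤ card S - card (I ∩ S)
      have hdisj : Disjoint S' (Finset.Icc a (a + r - 1) ∩ S) := by
        rw [Finset.disjoint_left]
        intro x hx hx'
        rw [hS'def, mem_filter] at hx
        rw [mem_inter, mem_Icc] at hx'
        omega
      have hsplit : S'.card + (Finset.Icc a (a + r - 1) ∩ S).card ≤ S.card := by
        rw [← Finset.card_union_of_disjoint hdisj]
        apply Finset.card_le_card
        intro x hx
        rw [Finset.mem_union] at hx
        rcases hx with hx | hx
        · exact (Finset.filter_subset _ _) hx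
        · exact (Finset.mem_inter.mp hx).2
      have hS'le : (S'.card : ℝ) ≤ (S.card : ℝ) - α * r := by
        have h1 : (S'.card : ℝ) + ((Finset.Icc a (a + r - 1) ∩ S).card : ℝ) ≤ S.card := by
          exact_mod_cast hsplit
        linarith
      have hr0 : (0:ℝ) < r := by exact_mod_cast hr1
      have : (BR.card : ℝ) ≤ r + S'.card / α := by
        have h2 := (Nat.cast_le (α := ℝ)).mpr hcard
        push_cast at h2
        linarith [hIH]
      calc (BR.card : ℝ) ≤ r + S'.card / α := this
        _ ≤ r + ((S.card : ℝ) - α * r) / α := by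
            gcongr
        _ = S.card / α := by field_simp; ring
    · rw [Finset.not_nonempty_iff_eq_empty] at hne
      rw [hne]
      simp only [Finset.card_empty, Nat.cast_zero]
      positivity

private lemma badL_card (n : ℕ) (α : ℝ) (hα0 : 0 < α) (S : Finset ℕ) :
    ((((Finset.Icc 1 n)).filter
        (fun v => ∃ r : ℕ, 1 ≤ r ∧
          α * r < ((Finset.Icc (v - r + 1) v ∩ S).card : ℝ))).card : ℝ)
      ≤ S.card / α := by
  induction S using Finset.strongInduction with
  | _ S ih =>
    set BL := (Finset.Icc 1 n).filter
      (fun v => ∃ r : ℕ, 1 ≤ r ∧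
        α * r < ((Finset.Icc (v - r + 1) v ∩ S).card : ℝ)) with hBLdef
    by_cases hne : BL.Nonempty
    · set a := BL.max' hne with hadef
      have haBL : a ∈ BL := BL.max'_mem hne
      rw [hBLdef, mem_filter] at haBL
      obtain ⟨haI, r, hr1, hrS⟩ := haBL
      set S' := S.filter (fun s => s < a - r + 1) with hS'def
      have hpos : 0 < ((Finset.Icc (a - r + 1) a ∩ S).card : ℝ) := by
        have : (0:ℝ) < α * r := by positivity
        linarith
      have hInonempty : (Finset.Icc (a - r + 1) a ∩ S).Nonempty := by
        rw [← Finset.card_pos]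
        exact_mod_cast hpos
      obtain ⟨s₀, hs₀⟩ := hInonempty
      rw [mem_inter, mem_Icc] at hs₀
      have hssub : S' ⊂ S := by
        constructor
        · exact Finset.filter_subset _ _
        · intro hsub
          have := hsub hs₀.2
          rw [hS'def, mem_filter] at this
          omega
      have hcover : BL ⊆ Finset.Icc (a - r + 1) a ∪
          ((Finset.Icc 1 n).filter
            (fun v => ∃ r' : ℕ, 1 ≤ r' ∧
              α * r' < ((Finset.Icc (v - r' + 1) v ∩ S').card : ℝ))) := by
        intro v hv
        have hav : v ≤ a := BL.le_max' v hv
        by_cases hvle : a - r + 1 ≤ v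
        · exact Finset.mem_union_left _ (by rw [mem_Icc]; exact ⟨hvle, hav⟩)
        · push_neg at hvle
          rw [hBLdef, mem_filter] at hv
          obtain ⟨hvI, r', hr'1, hr'S⟩ := hv
          refine Finset.mem_union_right _ (mem_filter.mpr ⟨hvI, r', hr'1, ?_⟩)
          have heq : Finset.Icc (v - r' + 1) v ∩ S' = Finset.Icc (v - r' + 1) v ∩ S := by
            ext s
            simp only [mem_inter, mem_Icc, hS'def, mem_filter]
            constructor
            · rintro ⟨⟨hs1, hs2⟩, hs3, _⟩; exact ⟨⟨hs1, hs2⟩, hs3⟩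
            · rintro ⟨⟨hs1, hs2⟩, hs3⟩; exact ⟨⟨hs1, hs2⟩, hs3, by omega⟩
          rw [heq]; exact hr'S
      have hIcard : (Finset.Icc (a - r + 1) a).card ≤ r := by
        rw [Nat.card_Icc]; omega
      have hcard : BL.card ≤ r +
          ((Finset.Icc 1 n).filter
            (fun v => ∃ r' : ℕ, 1 ≤ r' ∧
              α * r' < ((Finset.Icc (v - r' + 1) v ∩ S').card : ℝ))).card := by
        calc BL.card ≤ _ := Finset.card_le_card hcover
        _ ≤ (Finset.Icc (a - r + 1) a).card + _ := Finset.card_union_le _ _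
        _ ≤ r + _ := by omega
      have hIH := ih S' hssub
      have hdisj : Disjoint S' (Finset.Icc (a - r + 1) a ∩ S) := by
        rw [Finset.disjoint_left]
        intro x hx hx'
        rw [hS'def, mem_filter] at hx
        rw [mem_inter, mem_Icc] at hx'
        omega
      have hsplit : S'.card + (Finset.Icc (a - r + 1) a ∩ S).card ≤ S.card := by
        rw [← Finset.card_union_of_disjoint hdisj]
        apply Finset.card_le_card
        intro x hx
        rw [Finset.mem_union] at hx
        rcases hx with hx | hx
        · exact (Finset.filter_subset _ _) hx
        · exact (Finset.mem_inter.mp hx).2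
      have hS'le : (S'.card : ℝ) ≤ (S.card : ℝ) - α * r := by
        have h1 : (S'.card : ℝ) + ((Finset.Icc (a - r + 1) a ∩ S).card : ℝ) ≤ S.card := by
          exact_mod_cast hsplit
        linarith
      have hr0 : (0:ℝ) < r := by exact_mod_cast hr1
      have hstep : (BL.card : ℝ) ≤ r + S'.card / α := by
        have h2 := (Nat.cast_le (α := ℝ)).mpr hcard
        push_cast at h2
        linarith [hIH]
      calc (BL.card : ℝ) ≤ r + S'.card / α := hstep
        _ ≤ r + ((S.card : ℝ) - α * r) / α := by gcongr
        _ = S.card / α := by field_simp; ring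
    · rw [Finset.not_nonempty_iff_eq_empty] at hne
      rw [hne]
      simp only [Finset.card_empty, Nat.cast_zero]
      positivity

/-- At least `n - |S|·(2-α)/α` of the nodes in `[n] \ S` are `α`-good under `S`. -/
theorem alphaGood_count (n : ℕ) (hn : 1 ≤ n) (S : Finset ℕ) (hS : S ⊆ Finset.Icc 1 n)
    (α : ℝ) (hα0 : 0 < α) (hα1 : α < 1) :
    (n : ℝ) - S.card * (2 - α) / α ≤
      ({v : ℕ | v ∈ Finset.Icc 1 n ∧ AlphaGood S α v} : Set ℕ).ncard := by
  classical
  set BR := (Finset.Icc 1 n).filter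
    (fun v => ∃ r : ℕ, 1 ≤ r ∧
      α * r < ((Finset.Icc v (v + r - 1) ∩ S).card : ℝ)) with hBRdef
  set BL := (Finset.Icc 1 n).filter
    (fun v => ∃ r : ℕ, 1 ≤ r ∧
      α * r < ((Finset.Icc (v - r + 1) v ∩ S).card : ℝ)) with hBLdef
  set Good := (Finset.Icc 1 n).filter (fun v => AlphaGood S α v) with hGdef
  set Bad := (Finset.Icc 1 n).filter (fun v => ¬ AlphaGood S α v) with hBdef
  -- any element of S is in both BL and BR (via r = 1)
  have hSsub : S ⊆ BL ∩ BR := by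
    intro s hs
    have hsI : s ∈ Finset.Icc 1 n := hS hs
    have hs1 : 1 ≤ s := (Finset.mem_Icc.mp hsI).1
    have hsing : Finset.Icc s s ∩ S = {s} := by
      rw [Finset.Icc_self]
      exact Finset.singleton_inter_of_mem hs
    rw [Finset.mem_inter]
    constructor
    · rw [hBLdef, mem_filter]
      refine ⟨hsI, 1, le_refl 1, ?_⟩
      have h1 : s - 1 + 1 = s := by omega
      rw [h1, hsing]
      simp only [Finset.card_singleton, Nat.cast_one]
      linarith
    · rw [hBRdef, mem_filter]
      refine ⟨hsI, 1, le_refl 1, ?_⟩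
      have h1 : s + 1 - 1 = s := by omega
      rw [h1, hsing]
      simp only [Finset.card_singleton, Nat.cast_one]
      linarith
  -- bad nodes are in BL ∪ BR
  have hBadsub : Bad ⊆ BL ∪ BR := by
    intro v hv
    rw [hBdef, mem_filter] at hv
    obtain ⟨hvI, hvbad⟩ := hv
    by_cases hvS : v ∈ S
    · exact Finset.mem_union_left _ (Finset.mem_inter.mp (hSsub hvS)).1
    · rw [AlphaGood] at hvbad
      push_neg at hvbad
      obtain ⟨r, hr1, hr2⟩ := hvbad hvS
      by_cases hL : α * r < ((Finset.Icc (v - r + 1) v ∩ S).card : ℝ)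
      · exact Finset.mem_union_left _ (mem_filter.mpr ⟨hvI, r, hr1, hL⟩)
      · push_neg at hL
        have hR := hr2 hL
        exact Finset.mem_union_right _ (mem_filter.mpr ⟨hvI, r, hr1, hR⟩)
  -- counting
  have hGB : Good.card + Bad.card = n := by
    rw [hGdef, hBdef, Finset.card_filter_add_card_filter_not, Nat.card_Icc]
    omega
  have hunion : (BL ∪ BR).card + (BL ∩ BR).card = BL.card + BR.card :=
    Finset.card_union_add_card_inter _ _
  have hScard : S.card ≤ (BL ∩ BR).card := Finset.card_le_card hSsub
  have hBadcard : Bad.card ≤ (BL ∪ BR).card := Finset.card_le_card hBadsub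
  have hBLcard : (BL.card : ℝ) ≤ S.card / α := badL_card n α hα0 S
  have hBRcard : (BR.card : ℝ) ≤ S.card / α := badR_card n α hα0 S
  have hgoal : ({v : ℕ | v ∈ Finset.Icc 1 n ∧ AlphaGood S α v} : Set ℕ) = ↑Good := by
    rw [hGdef, Finset.coe_filter]
  rw [hgoal, Set.ncard_coe_finset]
  have hBad : (Bad.card : ℝ) ≤ S.card * (2 - α) / α := by
    have h1 : (Bad.card : ℝ) ≤ (BL ∪ BR).card := by exact_mod_cast hBadcard
    have h2 : ((BL ∪ BR).card : ℝ) + ((BL ∩ BR).card : ℝ) = BL.card + BR.card := by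
      exact_mod_cast hunion
    have h3 : (S.card : ℝ) ≤ ((BL ∩ BR).card : ℝ) := by exact_mod_cast hScard
    have : (S.card : ℝ)/α + S.card/α - S.card = S.card * (2 - α)/α := by
      field_simp; ring
    linarith
  have hGoodeq : (Good.card : ℝ) = n - Bad.card := by
    have : (Good.card : ℝ) + Bad.card = n := by exact_mod_cast hGB
    linarith
  rw [hGoodeq]
  linarith
end

section
/- For every δ > 0 there exists a constant c > 0 such that for every integer n ≥ 2 there exists a DAG G on [n] that is a δ-local expander and in which every node has at most c·log₂ n incoming edges and at most c·log₂ n outgoing edges. -/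
set_option maxHeartbeats 1000000

/-- A DAG given by an edge set `E` on `[n]` has `δ`-local expansion around node `v`. -/
def LocalExpansionE (n : ℕ) (E : Finset (ℕ × ℕ)) (δ : ℝ) (v : ℕ) : Prop :=
  ∀ r : ℕ, 1 ≤ r →
    (v + 2 * r - 1 ≤ n →
      ∀ W ⊆ Finset.Icc v (v + r - 1), ∀ X ⊆ Finset.Icc (v + r) (v + 2 * r - 1),
        δ * r ≤ (W.card : ℝ) → δ * r ≤ (X.card : ℝ) →
          ∃ a ∈ W, ∃ b ∈ X, (a, b) ∈ E) ∧
    (2 * r ≤ v →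
      ∀ Y ⊆ Finset.Icc (v - r + 1) v, ∀ Z ⊆ Finset.Icc (v - 2 * r + 1) (v - r),
        δ * r ≤ (Y.card : ℝ) → δ * r ≤ (Z.card : ℝ) →
          ∃ a ∈ Z, ∃ b ∈ Y, (a, b) ∈ E)


open Finset

lemma desc_aux (b s : ℕ) : ∀ k : ℕ, (b - s).descFactorial k * b ^ k ≤ (b - s) ^ k * b.descFactorial k
  | 0 => by simp
  | (k+1) => by
    have ih := desc_aux b s k
    rw [Nat.descFactorial_succ, Nat.descFactorial_succ, pow_succ, pow_succ]
    have key : (b - s - k) * b ≤ (b - s) * (b - k) := by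
      rcases Nat.le_total b (s + k) with h | h
      · have : b - s - k = 0 := by omega
        simp [this]
      · have e : b - s - k = b - (s + k) := by omega
        rw [e]
        zify [show s + k ≤ b by omega, show s ≤ b by omega, show k ≤ b by omega]
        nlinarith [Int.ofNat_nonneg s, Int.ofNat_nonneg k]
    calc (b - s - k) * (b - s).descFactorial k * (b ^ k * b)
        = ((b - s - k) * b) * ((b - s).descFactorial k * b ^ k) := by ring
      _ ≤ ((b - s) * (b - k)) * ((b - s) ^ k * b.descFactorial k) := Nat.mul_le_mul key ih
      _ = (b - s) ^ k * (b - s) * ((b - k) * b.descFactorial k) := by ring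

lemma card_fixed_image {b s : ℕ} (S R : Finset (Fin b)) (hS : S.card = s) (hR : R.card = s) :
    (Finset.univ.filter fun π : Equiv.Perm (Fin b) => S.image π = R).card
      ≤ s.factorial * (b - s).factorial := by
  classical
  set F := Finset.univ.filter fun π : Equiv.Perm (Fin b) => S.image π = R with hF
  have hmem : ∀ π : Equiv.Perm (Fin b), π ∈ F → S.image π = R := by
    intro π hπ; rw [hF, mem_filter] at hπ; exact hπ.2
  have m1 : ∀ (π : {π : Equiv.Perm (Fin b) // π ∈ F}) (x : {x // x ∈ S}), π.1 x.1 ∈ R := by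
    intro π x
    exact hmem π.1 π.2 ▸ Finset.mem_image_of_mem _ x.2
  have m2 : ∀ (π : {π : Equiv.Perm (Fin b) // π ∈ F}) (x : {x // x ∈ Sᶜ}), π.1 x.1 ∈ Rᶜ := by
    intro π x
    have h := hmem π.1 π.2
    have hx := Finset.mem_compl.mp x.2
    rw [Finset.mem_compl]
    intro hc
    rw [← h, Finset.mem_image] at hc
    obtain ⟨a, ha, hay⟩ := hc
    exact hx (by rwa [← π.1.injective hay])
  set Φ : {π : Equiv.Perm (Fin b) // π ∈ F} →
      ({x // x ∈ S} ↪ {x // x ∈ R}) × ({x // x ∈ Sᶜ} ↪ {x // x ∈ Rᶜ}) :=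
    fun π => (⟨fun x => ⟨π.1 x.1, m1 π x⟩,
                fun x y hxy => Subtype.ext (π.1.injective (congrArg Subtype.val hxy))⟩,
              ⟨fun x => ⟨π.1 x.1, m2 π x⟩,
                fun x y hxy => Subtype.ext (π.1.injective (congrArg Subtype.val hxy))⟩) with hΦ
  have hinj : Function.Injective Φ := by
    intro π₁ π₂ h
    rw [hΦ, Prod.mk.injEq] at h
    apply Subtype.ext
    apply Equiv.ext
    intro x
    by_cases hx : x ∈ S
    · have := DFunLike.congr_fun h.1 ⟨x, hx⟩
      exact congrArg Subtype.val this
    · have := DFunLike.congr_fun h.2 ⟨x, Finset.mem_compl.mpr hx⟩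
      exact congrArg Subtype.val this
  calc F.card = Fintype.card {π : Equiv.Perm (Fin b) // π ∈ F} := (Fintype.card_coe F).symm
    _ ≤ Fintype.card (({x // x ∈ S} ↪ {x // x ∈ R}) × ({x // x ∈ Sᶜ} ↪ {x // x ∈ Rᶜ})) :=
        Fintype.card_le_of_injective Φ hinj
    _ = s.factorial * (b - s).factorial := by
        rw [Fintype.card_prod, Fintype.card_embedding_eq, Fintype.card_embedding_eq]
        simp only [Fintype.card_coe, Finset.card_compl, Fintype.card_fin, hS, hR]
        rw [Nat.descFactorial_self, Nat.descFactorial_self]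

lemma card_avoid {b s : ℕ} (S T : Finset (Fin b)) (hS : S.card = s) (hT : T.card = s) :
    (Finset.univ.filter fun π : Equiv.Perm (Fin b) => ∀ x ∈ S, π x ∉ T).card
      ≤ (b - s).descFactorial s * (b - s).factorial := by
  classical
  set A := Finset.univ.filter fun π : Equiv.Perm (Fin b) => ∀ x ∈ S, π x ∉ T with hA
  have cover : A ⊆ (Tᶜ.powersetCard s).biUnion
      (fun R => Finset.univ.filter fun π : Equiv.Perm (Fin b) => S.image π = R) := by
    intro π hπ
    rw [hA, mem_filter] at hπ
    refine Finset.mem_biUnion.mpr ⟨S.image π, ?_, ?_⟩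
    · rw [Finset.mem_powersetCard]
      constructor
      · intro y hy
        rw [Finset.mem_image] at hy
        obtain ⟨x, hx, rfl⟩ := hy
        exact Finset.mem_compl.mpr (hπ.2 x hx)
      · rw [Finset.card_image_of_injective _ π.injective, hS]
    · simp
  calc A.card ≤ _ := Finset.card_le_card cover
    _ ≤ ∑ R ∈ Tᶜ.powersetCard s, (Finset.univ.filter fun π : Equiv.Perm (Fin b) => S.image π = R).card :=
        Finset.card_biUnion_le
    _ ≤ ∑ R ∈ Tᶜ.powersetCard s, s.factorial * (b - s).factorial := by
        apply Finset.sum_le_sum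
        intro R hR
        rw [Finset.mem_powersetCard] at hR
        exact card_fixed_image S R hS hR.2
    _ = (Tᶜ.powersetCard s).card * (s.factorial * (b - s).factorial) := by
        rw [Finset.sum_const, smul_eq_mul]
    _ = (b - s).choose s * (s.factorial * (b - s).factorial) := by
        rw [Finset.card_powersetCard, Finset.card_compl, Fintype.card_fin, hT]
    _ = (b - s).descFactorial s * (b - s).factorial := by
        rw [Nat.descFactorial_eq_factorial_mul_choose]
        ring

lemma exists_expander (γ : ℝ) (hγ0 : 0 < γ) (hγ1 : γ ≤ 1/2) (d : ℕ) (hd : 4 / γ^2 ≤ (d:ℝ))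
    (b : ℕ) (hb : 1 ≤ b) :
    ∃ H : Finset (ℕ × ℕ), (∀ e ∈ H, e.1 < b ∧ e.2 < b) ∧
      (∀ x, (H.filter fun e => e.1 = x).card ≤ d) ∧
      (∀ y, (H.filter fun e => e.2 = y).card ≤ d) ∧
      (∀ S T : Finset ℕ, S ⊆ Finset.range b → T ⊆ Finset.range b →
        γ * b ≤ (S.card : ℝ) → γ * b ≤ (T.card : ℝ) →
          ∃ p ∈ H, p.1 ∈ S ∧ p.2 ∈ T) := by
  classical
  set s := ⌈γ * (b:ℕ)⌉₊ with hs
  have hbR : (0:ℝ) < b := by exact_mod_cast hb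
  have hs1 : 1 ≤ s := by
    rw [hs]
    apply Nat.one_le_ceil_iff.mpr
    positivity
  have hsb : s ≤ b := by
    rw [hs]
    apply Nat.ceil_le.mpr
    nlinarith
  have hsγ : γ * b ≤ (s:ℝ) := by rw [hs]; exact Nat.le_ceil _
  -- the bad set of d-tuples of permutations
  set bad := Finset.univ.filter
      (fun ω : Fin d → Equiv.Perm (Fin b) =>
        ∃ S T : Finset (Fin b), S.card = s ∧ T.card = s ∧ ∀ j, ∀ x ∈ S, ω j x ∉ T) with hbad
  have key : bad.card < Fintype.card (Fin d → Equiv.Perm (Fin b)) := by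
    have cover : bad ⊆
        ((Finset.univ : Finset (Finset (Fin b) × Finset (Fin b))).filter
          (fun ST => ST.1.card = s ∧ ST.2.card = s)).biUnion
          (fun ST => Fintype.piFinset fun _ : Fin d =>
            Finset.univ.filter fun π : Equiv.Perm (Fin b) => ∀ x ∈ ST.1, π x ∉ ST.2) := by
      intro ω hω
      rw [hbad, mem_filter] at hω
      obtain ⟨_, S, T, hS, hT, havoid⟩ := hω
      refine Finset.mem_biUnion.mpr ⟨(S, T), by simp [hS, hT], ?_⟩
      rw [Fintype.mem_piFinset]
      intro j
      rw [mem_filter]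
      exact ⟨mem_univ _, havoid j⟩
    have count1 : bad.card ≤ 4 ^ b * ((b - s).descFactorial s * (b - s).factorial) ^ d := by
      calc bad.card ≤ _ := Finset.card_le_card cover
        _ ≤ ∑ ST ∈ (Finset.univ : Finset (Finset (Fin b) × Finset (Fin b))).filter
              (fun ST => ST.1.card = s ∧ ST.2.card = s),
            ((b - s).descFactorial s * (b - s).factorial) ^ d := by
          refine le_trans Finset.card_biUnion_le (Finset.sum_le_sum ?_)
          intro ST hST
          rw [mem_filter] at hST
          rw [Fintype.card_piFinset]
          rw [Finset.prod_const, Finset.card_univ, Fintype.card_fin]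
          exact Nat.pow_le_pow_left (card_avoid ST.1 ST.2 hST.2.1 hST.2.2) d
        _ ≤ ((Finset.univ : Finset (Finset (Fin b) × Finset (Fin b))).filter
              (fun ST => ST.1.card = s ∧ ST.2.card = s)).card *
            ((b - s).descFactorial s * (b - s).factorial) ^ d := by
          rw [Finset.sum_const, smul_eq_mul]
        _ ≤ 4 ^ b * ((b - s).descFactorial s * (b - s).factorial) ^ d := by
          apply Nat.mul_le_mul_right
          calc ((Finset.univ : Finset (Finset (Fin b) × Finset (Fin b))).filter _).card
              ≤ (Finset.univ : Finset (Finset (Fin b) × Finset (Fin b))).card :=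
                Finset.card_filter_le _ _
            _ = 4 ^ b := by
                simp only [Finset.card_univ, Fintype.card_prod, Fintype.card_finset,
                  Fintype.card_fin]
                rw [← pow_add, show (4:ℕ) = 2^2 from rfl, ← pow_mul]
                congr 1
                omega
    have hfactid : b.descFactorial s * (b - s).factorial = b.factorial := by
      rw [Nat.descFactorial_eq_factorial_mul_choose, ← Nat.choose_mul_factorial_mul_factorial hsb]
      ring
    -- real inequality
    have main : (4:ℝ) ^ b * (((b - s).descFactorial s : ℝ) * ((b - s).factorial : ℝ)) ^ d
        < (((b.descFactorial s : ℝ)) * ((b - s).factorial : ℝ)) ^ d := by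
      have hF : (0:ℝ) < ((b - s).factorial : ℝ) := by exact_mod_cast (b - s).factorial_pos
      have hB : (0:ℝ) < (b.descFactorial s : ℝ) := by
        have : b.descFactorial s ≠ 0 := by
          intro hz
          rw [Nat.descFactorial_eq_zero_iff_lt] at hz
          omega
        exact_mod_cast Nat.pos_of_ne_zero this
      have hA0 : (0:ℝ) ≤ ((b - s).descFactorial s : ℝ) := by positivity
      -- step 1 : A * b^s ≤ (b-s)^s * B
      have step1 : ((b - s).descFactorial s : ℝ) * (b:ℝ) ^ s
          ≤ ((b - s : ℕ) : ℝ) ^ s * (b.descFactorial s : ℝ) := by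
        exact_mod_cast desc_aux b s s
      -- step 2 : (b - s : ℕ) ≤ (1 - γ) * b
      have step2 : ((b - s : ℕ) : ℝ) ≤ (1 - γ) * b := by
        rw [Nat.cast_sub hsb]
        nlinarith
      have h1γ : (0:ℝ) ≤ 1 - γ := by linarith
      -- A ≤ (1-γ)^s * B
      have step3 : ((b - s).descFactorial s : ℝ) ≤ (1 - γ) ^ s * (b.descFactorial s : ℝ) := by
        have hbpow : (0:ℝ) < (b:ℝ) ^ s := by positivity
        rw [← mul_le_mul_iff_of_pos_right hbpow]
        calc ((b - s).descFactorial s : ℝ) * (b:ℝ) ^ s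
            ≤ ((b - s : ℕ) : ℝ) ^ s * (b.descFactorial s : ℝ) := step1
          _ ≤ ((1 - γ) * b) ^ s * (b.descFactorial s : ℝ) := by
              apply mul_le_mul_of_nonneg_right _ (le_of_lt hB)
              exact pow_le_pow_left₀ (by positivity) step2 s
          _ = (1 - γ) ^ s * (b.descFactorial s : ℝ) * (b:ℝ) ^ s := by rw [mul_pow]; ring
      -- (1-γ)^(s*d) ≤ exp (-(4*b))
      have step4 : ((1 - γ) ^ s) ^ d ≤ Real.exp (-(4 * (b:ℝ))) := by
        have e1 : (1 - γ) ≤ Real.exp (-γ) := by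
          have := Real.add_one_le_exp (-γ)
          linarith
        calc ((1 - γ) ^ s) ^ d = (1 - γ) ^ (s * d) := by rw [← pow_mul]
          _ ≤ Real.exp (-γ) ^ (s * d) := pow_le_pow_left₀ h1γ e1 _
          _ = Real.exp (((s * d : ℕ) : ℝ) * (-γ)) := by rw [Real.exp_nat_mul]
          _ ≤ Real.exp (-(4 * (b:ℝ))) := by
              apply Real.exp_le_exp.mpr
              have hsd : (γ * b) * (4 / γ ^ 2) ≤ ((s:ℕ):ℝ) * d :=
                mul_le_mul hsγ hd (by positivity) (by positivity)
              have heq : γ * (b:ℝ) * (4 / γ ^ 2) = 4 * b / γ := by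
                field_simp
              rw [heq] at hsd
              have h4b : 4 * (b:ℝ) ≤ (s:ℝ) * d * γ := by
                rw [div_le_iff₀ hγ0] at hsd
                linarith
              push_cast
              linarith
      -- combine
      have e4 : (4:ℝ) ^ b < Real.exp (4 * (b:ℝ)) := by
        have h45 : (4:ℝ) < Real.exp 4 := by
          have := Real.add_one_le_exp (4:ℝ)
          linarith
        calc (4:ℝ) ^ b < (Real.exp 4) ^ b :=
              pow_lt_pow_left₀ h45 (by norm_num) (by omega)
          _ = Real.exp (((b:ℕ):ℝ) * 4) := by rw [Real.exp_nat_mul]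
          _ = Real.exp (4 * (b:ℝ)) := by ring_nf
      calc (4:ℝ) ^ b * (((b - s).descFactorial s : ℝ) * ((b - s).factorial : ℝ)) ^ d
          = (4:ℝ) ^ b * (((b - s).descFactorial s : ℝ)) ^ d * (((b - s).factorial : ℝ)) ^ d := by
            rw [mul_pow]; ring
        _ ≤ (4:ℝ) ^ b * (((1 - γ) ^ s) ^ d * ((b.descFactorial s : ℝ)) ^ d) * (((b - s).factorial : ℝ)) ^ d := by
            apply mul_le_mul_of_nonneg_right _ (by positivity)
            apply mul_le_mul_of_nonneg_left _ (by positivity)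
            rw [← mul_pow]
            exact pow_le_pow_left₀ hA0 step3 d
        _ ≤ (4:ℝ) ^ b * (Real.exp (-(4 * (b:ℝ))) * ((b.descFactorial s : ℝ)) ^ d) * (((b - s).factorial : ℝ)) ^ d := by
            apply mul_le_mul_of_nonneg_right _ (by positivity)
            apply mul_le_mul_of_nonneg_left _ (by positivity)
            apply mul_le_mul_of_nonneg_right step4 (by positivity)
        _ < ((b.descFactorial s : ℝ) * ((b - s).factorial : ℝ)) ^ d := by
            rw [mul_pow]
            have hpos : (0:ℝ) < ((b.descFactorial s : ℝ)) ^ d * (((b - s).factorial : ℝ)) ^ d := by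
              positivity
            have hE : (0:ℝ) < Real.exp (4 * (b:ℝ)) := Real.exp_pos _
            have h41 : (4:ℝ) ^ b * Real.exp (-(4 * (b:ℝ))) < 1 := by
              rw [Real.exp_neg]
              calc (4:ℝ) ^ b * (Real.exp (4 * (b:ℝ)))⁻¹
                  < Real.exp (4 * (b:ℝ)) * (Real.exp (4 * (b:ℝ)))⁻¹ :=
                    mul_lt_mul_of_pos_right e4 (by positivity)
                _ = 1 := mul_inv_cancel₀ (ne_of_gt hE)
            nlinarith [hpos, h41, Real.exp_pos (-(4 * (b:ℝ)))]
    -- back to ℕ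
    have : (bad.card : ℝ) < ((b.factorial ^ d : ℕ) : ℝ) := by
      calc (bad.card : ℝ) ≤ ((4 ^ b * ((b - s).descFactorial s * (b - s).factorial) ^ d : ℕ) : ℝ) := by
            exact_mod_cast count1
        _ = (4:ℝ) ^ b * (((b - s).descFactorial s : ℝ) * ((b - s).factorial : ℝ)) ^ d := by push_cast; ring
        _ < (((b.descFactorial s : ℝ)) * ((b - s).factorial : ℝ)) ^ d := main
        _ = ((b.factorial ^ d : ℕ) : ℝ) := by
            rw [← hfactid]; push_cast; ring
    have hlt : bad.card < b.factorial ^ d := by exact_mod_cast this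
    calc bad.card < b.factorial ^ d := hlt
      _ = Fintype.card (Fin d → Equiv.Perm (Fin b)) := by
          simp [Fintype.card_fun, Fintype.card_perm]
  -- extract a good tuple
  have hgood : ∃ ω : Fin d → Equiv.Perm (Fin b), ω ∉ bad := by
    by_contra hc
    push_neg at hc
    have : (Finset.univ : Finset (Fin d → Equiv.Perm (Fin b))) ⊆ bad := fun ω _ => hc ω
    have := Finset.card_le_card this
    rw [Finset.card_univ] at this
    omega
  obtain ⟨ω, hω⟩ := hgood
  rw [hbad, mem_filter] at hω
  push_neg at hω
  have hgood2 : ∀ S T : Finset (Fin b), S.card = s → T.card = s →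
      ∃ j, ∃ x ∈ S, ω j x ∈ T := by
    intro S T hS hT
    have := hω (mem_univ ω) S T hS hT
    obtain ⟨j, x, hx, hxT⟩ := this
    exact ⟨j, x, hx, hxT⟩
  -- define H
  refine ⟨(Finset.univ : Finset (Fin d × Fin b)).image
      (fun q => ((q.2 : ℕ), ((ω q.1) q.2 : ℕ))), ?_, ?_, ?_, ?_⟩
  · intro e he
    rw [Finset.mem_image] at he
    obtain ⟨q, _, rfl⟩ := he
    exact ⟨q.2.isLt, (ω q.1 q.2).isLt⟩
  · intro x
    rw [Finset.filter_image]
    calc _ ≤ ((Finset.univ : Finset (Fin d × Fin b)).filter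
          (fun q => ((q.2 : ℕ) : ℕ) = x)).card := Finset.card_image_le
      _ ≤ (Finset.univ : Finset (Fin d)).card := by
          apply Finset.card_le_card_of_injOn Prod.fst (fun q _ => mem_univ _)
          intro q1 hq1 q2 hq2 hf
          simp only [coe_filter, Set.mem_setOf_eq] at hq1 hq2
          have : q1.2 = q2.2 := Fin.ext (hq1.2.trans hq2.2.symm)
          exact Prod.ext hf this
      _ = d := by rw [Finset.card_univ, Fintype.card_fin]
  · intro y
    rw [Finset.filter_image]
    calc _ ≤ ((Finset.univ : Finset (Fin d × Fin b)).filter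
          (fun q => ((ω q.1 q.2 : ℕ)) = y)).card := Finset.card_image_le
      _ ≤ (Finset.univ : Finset (Fin d)).card := by
          apply Finset.card_le_card_of_injOn Prod.fst (fun q _ => mem_univ _)
          intro q1 hq1 q2 hq2 hf
          simp only [coe_filter, Set.mem_setOf_eq] at hq1 hq2
          have hv : ω q1.1 q1.2 = ω q2.1 q2.2 := Fin.ext (hq1.2.trans hq2.2.symm)
          rw [hf] at hv
          exact Prod.ext hf ((ω q2.1).injective hv)
      _ = d := by rw [Finset.card_univ, Fintype.card_fin]
  · intro S T hSr hTr hSc hTc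
    have hSb : ∀ m ∈ S, m < b := fun m hm => Finset.mem_range.mp (hSr hm)
    have hTb : ∀ m ∈ T, m < b := fun m hm => Finset.mem_range.mp (hTr hm)
    set Sf := S.attachFin hSb with hSf
    set Tf := T.attachFin hTb with hTf
    have hsS : s ≤ Sf.card := by
      rw [Finset.card_attachFin]
      exact Nat.ceil_le.mpr (by exact_mod_cast hSc)
    have hsT : s ≤ Tf.card := by
      rw [Finset.card_attachFin]
      exact Nat.ceil_le.mpr (by exact_mod_cast hTc)
    obtain ⟨S0, hS0sub, hS0⟩ := Finset.exists_subset_card_eq hsS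
    obtain ⟨T0, hT0sub, hT0⟩ := Finset.exists_subset_card_eq hsT
    obtain ⟨j, x, hx, hxT⟩ := hgood2 S0 T0 hS0 hT0
    refine ⟨((x : ℕ), ((ω j) x : ℕ)), Finset.mem_image.mpr ⟨(j, x), mem_univ _, rfl⟩, ?_, ?_⟩
    · have := hS0sub hx
      rwa [hSf, Finset.mem_attachFin] at this
    · have := hT0sub hxT
      rwa [hTf, Finset.mem_attachFin] at this

/-- short edges: all `(u,v)` with `1 ≤ u < v ≤ n` and `v - u ≤ M`. -/
def shortE (n M : ℕ) : Finset (ℕ × ℕ) :=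
  (Finset.Icc 1 n ×ˢ Finset.Icc 1 n).filter fun e => e.1 < e.2 ∧ e.2 - e.1 ≤ M

/-- a copy of the bipartite graph `Hk` placed between blocks `i` and `i+j` at scale `b`. -/
def slotE (Hk : Finset (ℕ × ℕ)) (b i j : ℕ) : Finset (ℕ × ℕ) :=
  Hk.image fun p => (i * b + 1 + p.1, (i + j) * b + 1 + p.2)

/-- expander edges over all scales `2^k`, `k ≤ K`, and block distances `1 ≤ j ≤ D`. -/
def expE (H : ℕ → Finset (ℕ × ℕ)) (n D K : ℕ) : Finset (ℕ × ℕ) :=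
  (Finset.range (K + 1)).biUnion fun k =>
    ((Finset.range n) ×ˢ (Finset.Icc 1 D)).biUnion fun ij =>
      if (ij.1 + ij.2 + 1) * 2 ^ k ≤ n then slotE (H k) (2 ^ k) ij.1 ij.2 else ∅

lemma lt_div_mul_add (a b : ℕ) (hb : 0 < b) : a < a / b * b + b := by
  have := (Nat.div_lt_iff_lt_mul hb).mp (Nat.lt_succ_self (a / b))
  rw [Nat.succ_mul] at this
  omega

lemma dense_block (δ₁ : ℝ) (hδ : 0 < δ₁)
    (b v r : ℕ) (hb : 1 ≤ b) (hv : 1 ≤ v) (hr : 1 ≤ r)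
    (W : Finset ℕ) (hW : W ⊆ Finset.Icc v (v + r - 1))
    (hcard : δ₁ * r ≤ (W.card : ℝ))
    (hb4 : (4:ℝ) * b ≤ δ₁ * r) :
    ∃ i : ℕ, v ≤ i * b + 1 ∧ i * b + b ≤ v + r - 1 ∧
      (δ₁ / 2) * b ≤ ((W.filter fun x => (x - 1) / b = i).card : ℝ) := by
  classical
  have hb0 : 0 < b := hb
  set W' := W.filter (fun x => (x - 1) / b ≠ (v - 1) / b ∧ (x - 1) / b ≠ (v + r - 2) / b) with hW'
  -- every index showing up in W' gives a block inside the interval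
  have hblock : ∀ x ∈ W', v ≤ ((x - 1) / b) * b + 1 ∧ ((x - 1) / b) * b + b ≤ v + r - 1 := by
    intro x hx
    rw [hW', mem_filter] at hx
    obtain ⟨hxW, hne1, hne2⟩ := hx
    have hxI := hW hxW
    rw [Finset.mem_Icc] at hxI
    have hx1 : 1 ≤ x := le_trans hv hxI.1
    set i := (x - 1) / b with hi
    have hilb : i * b ≤ x - 1 := Nat.div_mul_le_self _ _
    have hiub : x - 1 < i * b + b := by
      rw [hi]
      exact lt_div_mul_add (x - 1) b hb0
    constructor
    · by_contra hcon
      push_neg at hcon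
      apply hne1
      rw [hi]
      have h1 : i ≤ (v - 1) / b := by
        rw [Nat.le_div_iff_mul_le hb0]
        omega
      have h2 : (v - 1) / b < i + 1 := by
        rw [Nat.div_lt_iff_lt_mul hb0]
        have : v - 1 ≤ x - 1 := by omega
        calc v - 1 ≤ x - 1 := this
          _ < i * b + b := hiub
          _ = (i + 1) * b := by ring
      omega
    · by_contra hcon
      push_neg at hcon
      apply hne2
      rw [hi]
      have h1 : i ≤ (v + r - 2) / b := by
        rw [Nat.le_div_iff_mul_le hb0]
        omega
      have h2 : (v + r - 2) / b < i + 1 := by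
        rw [Nat.div_lt_iff_lt_mul hb0]
        have : v + r - 2 < i * b + b := by omega
        calc v + r - 2 < i * b + b := this
          _ = (i + 1) * b := by ring
      omega
  -- W' is big
  have hWsplit : W.card ≤ W'.card + 2 * b := by
    have hsub : W ⊆ W' ∪ (W.filter fun x => (x - 1) / b = (v - 1) / b)
        ∪ (W.filter fun x => (x - 1) / b = (v + r - 2) / b) := by
      intro x hx
      by_cases h1 : (x - 1) / b = (v - 1) / b
      · exact Finset.mem_union_left _ (Finset.mem_union_right _ (mem_filter.mpr ⟨hx, h1⟩))
      · by_cases h2 : (x - 1) / b = (v + r - 2) / b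
        · exact Finset.mem_union_right _ (mem_filter.mpr ⟨hx, h2⟩)
        · exact Finset.mem_union_left _ (Finset.mem_union_left _
            (by rw [hW', mem_filter]; exact ⟨hx, h1, h2⟩))
    have hfil : ∀ q : ℕ, (W.filter fun x => (x - 1) / b = q).card ≤ b := by
      intro q
      have : (W.filter fun x => (x - 1) / b = q) ⊆ Finset.Icc (q * b + 1) (q * b + b) := by
        intro x hx
        rw [mem_filter] at hx
        have hxI := hW hx.1
        rw [Finset.mem_Icc] at hxI ⊢
        have hx1 : 1 ≤ x := le_trans hv hxI.1
        have hilb : q * b ≤ x - 1 := hx.2 ▸ Nat.div_mul_le_self _ _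
        have hiub : x - 1 < q * b + b := by
          rw [← hx.2]
          exact lt_div_mul_add (x - 1) b hb0
        omega
      calc _ ≤ (Finset.Icc (q * b + 1) (q * b + b)).card := Finset.card_le_card this
        _ = b := by rw [Nat.card_Icc]; omega
    calc W.card ≤ _ := Finset.card_le_card hsub
      _ ≤ (W' ∪ (W.filter fun x => (x - 1) / b = (v - 1) / b)).card
          + (W.filter fun x => (x - 1) / b = (v + r - 2) / b).card := Finset.card_union_le _ _
      _ ≤ W'.card + (W.filter fun x => (x - 1) / b = (v - 1) / b).card
          + (W.filter fun x => (x - 1) / b = (v + r - 2) / b).card := by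
            have := Finset.card_union_le W' (W.filter fun x => (x - 1) / b = (v - 1) / b)
            omega
      _ ≤ W'.card + 2 * b := by
            have := hfil ((v - 1) / b)
            have := hfil ((v + r - 2) / b)
            omega
  -- index set
  set Idx := W'.image (fun x => (x - 1) / b) with hIdx
  have hfib : W'.card = ∑ i ∈ Idx, (W'.filter fun x => (x - 1) / b = i).card :=
    Finset.card_eq_sum_card_fiberwise (fun x hx => Finset.mem_image_of_mem _ hx)
  -- Idx.card * b ≤ r
  have hIdxcard : Idx.card * b ≤ r := by
    have hdisj : ∀ i ∈ Idx, ∀ i' ∈ Idx, i ≠ i' →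
        Disjoint (Finset.Icc (i * b + 1) (i * b + b)) (Finset.Icc (i' * b + 1) (i' * b + b)) := by
      intro i _ i' _ hne
      rw [Finset.disjoint_left]
      intro a ha ha'
      rw [Finset.mem_Icc] at ha ha'
      rcases Nat.lt_or_ge i i' with h | h
      · have : i + 1 ≤ i' := h
        have : (i + 1) * b ≤ i' * b := Nat.mul_le_mul_right _ this
        nlinarith
      · have : i' < i := by omega
        have h2 : i' + 1 ≤ i := this
        have : (i' + 1) * b ≤ i * b := Nat.mul_le_mul_right _ h2
        nlinarith
    have hsub2 : Idx.biUnion (fun i => Finset.Icc (i * b + 1) (i * b + b)) ⊆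
        Finset.Icc v (v + r - 1) := by
      intro a ha
      rw [Finset.mem_biUnion] at ha
      obtain ⟨i, hi, hai⟩ := ha
      rw [hIdx, Finset.mem_image] at hi
      obtain ⟨x, hx, hxi⟩ := hi
      have := hblock x hx
      rw [hxi] at this
      rw [Finset.mem_Icc] at hai ⊢
      omega
    have h1 := Finset.card_biUnion hdisj
    have h2 := Finset.card_le_card hsub2
    rw [h1] at h2
    have h3 : ∀ i : ℕ, (Finset.Icc (i * b + 1) (i * b + b)).card = b := by
      intro i; rw [Nat.card_Icc]; omega
    calc Idx.card * b = ∑ _i ∈ Idx, b := by rw [Finset.sum_const, smul_eq_mul]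
      _ = ∑ i ∈ Idx, (Finset.Icc (i * b + 1) (i * b + b)).card :=
          Finset.sum_congr rfl (fun i _ => (h3 i).symm)
      _ ≤ (Finset.Icc v (v + r - 1)).card := h2
      _ = r := by rw [Nat.card_Icc]; omega
  -- pigeonhole
  by_contra hcon
  push_neg at hcon
  have hsmall : ∀ i ∈ Idx, ((W'.filter fun x => (x - 1) / b = i).card : ℝ) < (δ₁ / 2) * b := by
    intro i hi
    rw [hIdx, Finset.mem_image] at hi
    obtain ⟨x, hx, hxi⟩ := hi
    have hbl := hblock x hx
    rw [hxi] at hbl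
    have := hcon i hbl.1 hbl.2
    calc ((W'.filter fun x => (x - 1) / b = i).card : ℝ)
        ≤ ((W.filter fun x => (x - 1) / b = i).card : ℝ) := by
          exact_mod_cast Finset.card_le_card (Finset.filter_subset_filter _ (Finset.filter_subset _ _))
      _ < (δ₁ / 2) * b := this
  have hW'big : δ₁ * r - 2 * b ≤ (W'.card : ℝ) := by
    have : (W.card : ℝ) ≤ (W'.card : ℝ) + 2 * b := by exact_mod_cast hWsplit
    linarith
  have hbR : (0:ℝ) < b := by exact_mod_cast hb0
  have hW'pos : (0:ℝ) < (W'.card : ℝ) := by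
    have : (0:ℝ) < δ₁ * r - 2 * b := by linarith
    linarith
  have hIdxne : Idx.Nonempty := by
    by_contra hc
    rw [Finset.not_nonempty_iff_eq_empty] at hc
    rw [hc, Finset.sum_empty] at hfib
    rw [hfib] at hW'pos
    simp at hW'pos
  have hsum : (W'.card : ℝ) < Idx.card * ((δ₁ / 2) * b) := by
    have : (W'.card : ℝ) = ∑ i ∈ Idx, ((W'.filter fun x => (x - 1) / b = i).card : ℝ) := by
      rw [hfib]; push_cast; ring
    rw [this]
    calc ∑ i ∈ Idx, ((W'.filter fun x => (x - 1) / b = i).card : ℝ)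
        < ∑ _i ∈ Idx, (δ₁ / 2) * b := Finset.sum_lt_sum_of_nonempty hIdxne hsmall
      _ = Idx.card * ((δ₁ / 2) * b) := by rw [Finset.sum_const, nsmul_eq_mul]
  have hIc : (Idx.card : ℝ) * b ≤ r := by exact_mod_cast hIdxcard
  have : (Idx.card : ℝ) * ((δ₁ / 2) * b) ≤ (δ₁ / 2) * r := by
    have h := mul_le_mul_of_nonneg_left hIc (le_of_lt (half_pos hδ))
    calc (Idx.card : ℝ) * ((δ₁ / 2) * b) = (δ₁ / 2) * ((Idx.card : ℝ) * b) := by ring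
      _ ≤ (δ₁ / 2) * r := h
  linarith

lemma slot_deg_snd (Hk : Finset (ℕ × ℕ)) (d b i j v : ℕ)
    (hdeg : ∀ y, (Hk.filter fun e => e.2 = y).card ≤ d) :
    ((slotE Hk b i j).filter fun e => e.2 = v).card ≤ d := by
  classical
  unfold slotE
  rw [Finset.filter_image]
  calc _ ≤ (Hk.filter fun p => (i + j) * b + 1 + p.2 = v).card := Finset.card_image_le
    _ ≤ (Hk.filter fun p => p.2 = v - ((i + j) * b + 1)).card := by
        apply Finset.card_le_card
        apply Finset.monotone_filter_right
        intro p hp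
        omega
    _ ≤ d := hdeg _

lemma slot_deg_fst (Hk : Finset (ℕ × ℕ)) (d b i j v : ℕ)
    (hdeg : ∀ y, (Hk.filter fun e => e.1 = y).card ≤ d) :
    ((slotE Hk b i j).filter fun e => e.1 = v).card ≤ d := by
  classical
  unfold slotE
  rw [Finset.filter_image]
  calc _ ≤ (Hk.filter fun p => i * b + 1 + p.1 = v).card := Finset.card_image_le
    _ ≤ (Hk.filter fun p => p.1 = v - (i * b + 1)).card := by
        apply Finset.card_le_card
        apply Finset.monotone_filter_right
        intro p hp
        omega
    _ ≤ d := hdeg _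

lemma slot_empty_snd (Hk : Finset (ℕ × ℕ)) (b i j v : ℕ) (hb : 0 < b)
    (hval : ∀ e ∈ Hk, e.2 < b) (hne : i + j ≠ (v - 1) / b) :
    ((slotE Hk b i j).filter fun e => e.2 = v) = ∅ := by
  classical
  rw [Finset.eq_empty_iff_forall_notMem]
  intro e he
  rw [Finset.mem_filter] at he
  obtain ⟨hmem, hev⟩ := he
  unfold slotE at hmem
  rw [Finset.mem_image] at hmem
  obtain ⟨p, hp, rfl⟩ := hmem
  have hp2 : p.2 < b := hval p hp
  apply hne
  simp only at hev
  have hv1 : (i + j) * b + 1 + p.2 - 1 = b * (i + j) + p.2 := by ring_nf; omega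
  rw [← hev, hv1, Nat.mul_add_div hb, Nat.div_eq_of_lt hp2]
  omega

lemma slot_empty_fst (Hk : Finset (ℕ × ℕ)) (b i j v : ℕ) (hb : 0 < b)
    (hval : ∀ e ∈ Hk, e.1 < b) (hne : i ≠ (v - 1) / b) :
    ((slotE Hk b i j).filter fun e => e.1 = v) = ∅ := by
  classical
  rw [Finset.eq_empty_iff_forall_notMem]
  intro e he
  rw [Finset.mem_filter] at he
  obtain ⟨hmem, hev⟩ := he
  unfold slotE at hmem
  rw [Finset.mem_image] at hmem
  obtain ⟨p, hp, rfl⟩ := hmem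
  have hp1 : p.1 < b := hval p hp
  apply hne
  simp only at hev
  have hv1 : i * b + 1 + p.1 - 1 = b * i + p.1 := by ring_nf; omega
  rw [← hev, hv1, Nat.mul_add_div hb, Nat.div_eq_of_lt hp1]
  omega

lemma sum_single_le (n d i₀ : ℕ) (f : ℕ → ℕ) (hz : ∀ i, i ≠ i₀ → f i = 0) (hb : f i₀ ≤ d) :
    ∑ i ∈ Finset.range n, f i ≤ d := by
  calc ∑ i ∈ Finset.range n, f i
      = ∑ i ∈ (Finset.range n).filter (fun i => i = i₀), f i := by
        rw [Finset.sum_filter_of_ne]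
        intro x _ hfx
        by_contra hne
        exact hfx (hz x hne)
    _ ≤ ∑ i ∈ {i₀}, f i := Finset.sum_le_sum_of_subset
        (fun x hx => by rw [Finset.mem_filter] at hx; rw [Finset.mem_singleton]; exact hx.2)
    _ = f i₀ := Finset.sum_singleton _ _
    _ ≤ d := hb

lemma expE_deg_snd (H : ℕ → Finset (ℕ × ℕ)) (n D K d v : ℕ)
    (hval : ∀ k, ∀ e ∈ H k, e.2 < 2 ^ k)
    (hdeg : ∀ k, ∀ y, ((H k).filter fun e => e.2 = y).card ≤ d) :
    ((expE H n D K).filter fun e => e.2 = v).card ≤ (K + 1) * (D * d) := by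
  classical
  unfold expE
  rw [Finset.filter_biUnion]
  calc _ ≤ ∑ k ∈ Finset.range (K + 1),
        ((((Finset.range n) ×ˢ (Finset.Icc 1 D)).biUnion fun ij =>
          if (ij.1 + ij.2 + 1) * 2 ^ k ≤ n then slotE (H k) (2 ^ k) ij.1 ij.2 else ∅).filter
            fun e => e.2 = v).card := by
        rw [← Finset.filter_biUnion]
        rw [Finset.filter_biUnion]
        exact Finset.card_biUnion_le
    _ ≤ ∑ _k ∈ Finset.range (K + 1), D * d := by
        apply Finset.sum_le_sum
        intro k _
        rw [Finset.filter_biUnion]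
        calc _ ≤ ∑ ij ∈ (Finset.range n) ×ˢ (Finset.Icc 1 D),
              ((if (ij.1 + ij.2 + 1) * 2 ^ k ≤ n then slotE (H k) (2 ^ k) ij.1 ij.2 else ∅).filter
                fun e => e.2 = v).card := Finset.card_biUnion_le
          _ = ∑ i ∈ Finset.range n, ∑ j ∈ Finset.Icc 1 D,
              ((if (i + j + 1) * 2 ^ k ≤ n then slotE (H k) (2 ^ k) i j else ∅).filter
                fun e => e.2 = v).card := by rw [Finset.sum_product]
          _ = ∑ j ∈ Finset.Icc 1 D, ∑ i ∈ Finset.range n,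
              ((if (i + j + 1) * 2 ^ k ≤ n then slotE (H k) (2 ^ k) i j else ∅).filter
                fun e => e.2 = v).card := Finset.sum_comm
          _ ≤ ∑ _j ∈ Finset.Icc 1 D, d := by
              apply Finset.sum_le_sum
              intro j _
              apply sum_single_le n d ((v - 1) / 2 ^ k - j)
              · intro i hne
                by_cases hc : (i + j + 1) * 2 ^ k ≤ n
                · rw [if_pos hc]
                  rcases eq_or_ne (i + j) ((v - 1) / 2 ^ k) with he | hne2
                  · exfalso; omega
                  · rw [slot_empty_snd (H k) (2 ^ k) i j v (Nat.pow_pos (by norm_num))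
                      (hval k) hne2]
                    simp
                · rw [if_neg hc]
                  simp
              · by_cases hc : (((v - 1) / 2 ^ k - j) + j + 1) * 2 ^ k ≤ n
                · rw [if_pos hc]
                  exact slot_deg_snd (H k) d (2 ^ k) _ j v (hdeg k)
                · rw [if_neg hc]
                  simp
          _ = D * d := by rw [Finset.sum_const, smul_eq_mul, Nat.card_Icc, Nat.add_sub_cancel]
    _ = (K + 1) * (D * d) := by rw [Finset.sum_const, smul_eq_mul, Finset.card_range]

lemma expE_deg_fst (H : ℕ → Finset (ℕ × ℕ)) (n D K d v : ℕ)
    (hval : ∀ k, ∀ e ∈ H k, e.1 < 2 ^ k)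
    (hdeg : ∀ k, ∀ y, ((H k).filter fun e => e.1 = y).card ≤ d) :
    ((expE H n D K).filter fun e => e.1 = v).card ≤ (K + 1) * (D * d) := by
  classical
  unfold expE
  rw [Finset.filter_biUnion]
  calc _ ≤ ∑ k ∈ Finset.range (K + 1),
        ((((Finset.range n) ×ˢ (Finset.Icc 1 D)).biUnion fun ij =>
          if (ij.1 + ij.2 + 1) * 2 ^ k ≤ n then slotE (H k) (2 ^ k) ij.1 ij.2 else ∅).filter
            fun e => e.1 = v).card := by
        rw [← Finset.filter_biUnion]
        rw [Finset.filter_biUnion]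
        exact Finset.card_biUnion_le
    _ ≤ ∑ _k ∈ Finset.range (K + 1), D * d := by
        apply Finset.sum_le_sum
        intro k _
        rw [Finset.filter_biUnion]
        calc _ ≤ ∑ ij ∈ (Finset.range n) ×ˢ (Finset.Icc 1 D),
              ((if (ij.1 + ij.2 + 1) * 2 ^ k ≤ n then slotE (H k) (2 ^ k) ij.1 ij.2 else ∅).filter
                fun e => e.1 = v).card := Finset.card_biUnion_le
          _ = ∑ i ∈ Finset.range n, ∑ j ∈ Finset.Icc 1 D,
              ((if (i + j + 1) * 2 ^ k ≤ n then slotE (H k) (2 ^ k) i j else ∅).filter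
                fun e => e.1 = v).card := by rw [Finset.sum_product]
          _ = ∑ j ∈ Finset.Icc 1 D, ∑ i ∈ Finset.range n,
              ((if (i + j + 1) * 2 ^ k ≤ n then slotE (H k) (2 ^ k) i j else ∅).filter
                fun e => e.1 = v).card := Finset.sum_comm
          _ ≤ ∑ _j ∈ Finset.Icc 1 D, d := by
              apply Finset.sum_le_sum
              intro j _
              apply sum_single_le n d ((v - 1) / 2 ^ k)
              · intro i hne
                by_cases hc : (i + j + 1) * 2 ^ k ≤ n
                · rw [if_pos hc]
                  rw [slot_empty_fst (H k) (2 ^ k) i j v (Nat.pow_pos (by norm_num))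
                    (hval k) hne]
                  simp
                · rw [if_neg hc]
                  simp
              · by_cases hc : (((v - 1) / 2 ^ k) + j + 1) * 2 ^ k ≤ n
                · rw [if_pos hc]
                  exact slot_deg_fst (H k) d (2 ^ k) _ j v (hdeg k)
                · rw [if_neg hc]
                  simp
          _ = D * d := by rw [Finset.sum_const, smul_eq_mul, Nat.card_Icc, Nat.add_sub_cancel]
    _ = (K + 1) * (D * d) := by rw [Finset.sum_const, smul_eq_mul, Finset.card_range]

lemma shortE_deg_snd (n M v : ℕ) (hM : 1 ≤ M) :
    ((shortE n M).filter fun e => e.2 = v).card ≤ M := by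
  classical
  have hsub : ((shortE n M).filter fun e => e.2 = v) ⊆ Finset.Icc (v - M) (v - 1) ×ˢ {v} := by
    intro e he
    rw [Finset.mem_filter] at he
    obtain ⟨hmem, hev⟩ := he
    unfold shortE at hmem
    rw [Finset.mem_filter, Finset.mem_product, Finset.mem_Icc, Finset.mem_Icc] at hmem
    rw [Finset.mem_product, Finset.mem_Icc, Finset.mem_singleton]
    omega
  calc _ ≤ (Finset.Icc (v - M) (v - 1) ×ˢ ({v} : Finset ℕ)).card := Finset.card_le_card hsub
    _ = (Finset.Icc (v - M) (v - 1)).card * 1 := by rw [Finset.card_product, Finset.card_singleton]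
    _ ≤ M := by rw [Nat.card_Icc]; omega

lemma shortE_deg_fst (n M v : ℕ) (hM : 1 ≤ M) :
    ((shortE n M).filter fun e => e.1 = v).card ≤ M := by
  classical
  have hsub : ((shortE n M).filter fun e => e.1 = v) ⊆ ({v} : Finset ℕ) ×ˢ Finset.Icc (v + 1) (v + M) := by
    intro e he
    rw [Finset.mem_filter] at he
    obtain ⟨hmem, hev⟩ := he
    unfold shortE at hmem
    rw [Finset.mem_filter, Finset.mem_product, Finset.mem_Icc, Finset.mem_Icc] at hmem
    rw [Finset.mem_product, Finset.mem_Icc, Finset.mem_singleton]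
    omega
  calc _ ≤ (({v} : Finset ℕ) ×ˢ Finset.Icc (v + 1) (v + M)).card := Finset.card_le_card hsub
    _ = 1 * (Finset.Icc (v + 1) (v + M)).card := by rw [Finset.card_product, Finset.card_singleton]
    _ ≤ M := by rw [Nat.card_Icc]; omega

lemma forward_exp (δ₀ : ℝ) (h0 : 0 < δ₀) (h1 : δ₀ ≤ 1)
    (D : ℕ) (hD : 32 / δ₀ ≤ (D:ℝ))
    (H : ℕ → Finset (ℕ × ℕ))
    (hHval : ∀ k, ∀ e ∈ H k, e.1 < 2 ^ k ∧ e.2 < 2 ^ k)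
    (hHexp : ∀ k, ∀ S T : Finset ℕ, S ⊆ Finset.range (2 ^ k) → T ⊆ Finset.range (2 ^ k) →
      (δ₀ / 2) * (2 ^ k : ℕ) ≤ (S.card : ℝ) → (δ₀ / 2) * (2 ^ k : ℕ) ≤ (T.card : ℝ) →
      ∃ p ∈ H k, p.1 ∈ S ∧ p.2 ∈ T)
    (n : ℕ) (hn : 2 ≤ n)
    (v r : ℕ) (hv : 1 ≤ v) (hr : 1 ≤ r) (hvr : v + 2 * r - 1 ≤ n)
    (W X : Finset ℕ) (hW : W ⊆ Finset.Icc v (v + r - 1))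
    (hX : X ⊆ Finset.Icc (v + r) (v + 2 * r - 1))
    (hWc : δ₀ * r ≤ (W.card : ℝ)) (hXc : δ₀ * r ≤ (X.card : ℝ)) :
    ∃ a ∈ W, ∃ c ∈ X, (a, c) ∈ shortE n D ∪ expE H n D (Nat.log 2 n) := by
  classical
  have hrR : (0:ℝ) < r := by exact_mod_cast hr
  have hWne : W.Nonempty := by
    rw [← Finset.card_pos]
    have hcp : (0:ℝ) < (W.card : ℝ) := lt_of_lt_of_le (by positivity) hWc
    exact_mod_cast hcp
  have hXne : X.Nonempty := by
    rw [← Finset.card_pos]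
    have hcp : (0:ℝ) < (X.card : ℝ) := lt_of_lt_of_le (by positivity) hXc
    exact_mod_cast hcp
  by_cases hcase : 2 * r ≤ D
  -- short case
  · obtain ⟨a, ha⟩ := hWne
    obtain ⟨c, hc⟩ := hXne
    have haI := hW ha
    have hcI := hX hc
    rw [Finset.mem_Icc] at haI hcI
    refine ⟨a, ha, c, hc, Finset.mem_union_left _ ?_⟩
    unfold shortE
    rw [Finset.mem_filter, Finset.mem_product, Finset.mem_Icc, Finset.mem_Icc]
    omega
  -- expander case
  · push_neg at hcase
    have hDr : (D:ℝ) < 2 * r := by exact_mod_cast hcase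
    have hr16 : 16 < δ₀ * r := by
      have : 32 / δ₀ < 2 * r := lt_of_le_of_lt hD hDr
      have h2 : 32 < δ₀ * (2 * r) := by
        rw [div_lt_iff₀ h0] at this
        linarith
      linarith
    set q := ⌊δ₀ * r / 4⌋₊ with hq
    have hq4 : 4 ≤ q := by
      rw [hq]
      apply Nat.le_floor
      push_cast
      linarith
    have hqle : (q:ℝ) ≤ δ₀ * r / 4 := Nat.floor_le (by positivity)
    have hqgt : δ₀ * r / 4 < q + 1 := Nat.lt_floor_add_one _
    set k := Nat.log 2 q with hk
    set b := 2 ^ k with hb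
    have hb1 : 1 ≤ b := Nat.one_le_two_pow
    have hbq : b ≤ q := by
      rw [hb, hk]
      exact Nat.pow_log_le_self 2 (by omega)
    have hqb : q < 2 * b := by
      have := Nat.lt_pow_succ_log_self (show 1 < 2 by norm_num) q
      rw [hb, hk]
      calc q < 2 ^ (Nat.log 2 q).succ := this
        _ = 2 * 2 ^ Nat.log 2 q := by rw [pow_succ]; ring
    have hbR : (0:ℝ) < b := by exact_mod_cast hb1
    have hqR : (0:ℝ) < q := by
      have : (0:ℕ) < q := by omega
      exact_mod_cast this
    have hbleR : (b:ℝ) ≤ q := by exact_mod_cast hbq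
    have h4b : (4:ℝ) * b ≤ δ₀ * r := by
      calc (4:ℝ) * b ≤ 4 * q := by linarith
        _ ≤ δ₀ * r := by linarith
    have hblow : δ₀ * r < 8 * b := by
      have hqb1 : q + 1 ≤ 2 * b := hqb
      have hqbR : ((q:ℝ) + 1) ≤ 2 * b := by exact_mod_cast hqb1
      linarith
    -- dense blocks
    obtain ⟨i₁, hi₁v, hi₁e, hWd⟩ := dense_block δ₀ h0 b v r hb1 hv hr W hW hWc h4b
    have hv' : 1 ≤ v + r := by omega
    have hX' : X ⊆ Finset.Icc (v + r) (v + r + r - 1) := by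
      have : v + r + r - 1 = v + 2 * r - 1 := by omega
      rw [this]
      exact hX
    obtain ⟨i₂, hi₂v, hi₂e, hXd⟩ := dense_block δ₀ h0 b (v + r) r hb1 hv' hr X hX' hXc h4b
    have hi₂e' : i₂ * b + b ≤ v + 2 * r - 1 := by omega
    -- i₁ < i₂
    have hii : i₁ + 1 ≤ i₂ := by
      have h5 : i₁ * b + b ≤ i₂ * b := by omega
      have : (i₁ + 1) * b ≤ i₂ * b := by
        calc (i₁ + 1) * b = i₁ * b + b := by ring
          _ ≤ i₂ * b := h5
      exact Nat.le_of_mul_le_mul_right this (by omega)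
    set j := i₂ - i₁ with hj
    have hj1 : 1 ≤ j := by omega
    have hi₁j : i₁ + j = i₂ := by omega
    -- j ≤ D
    have hjb : j * b + b ≤ 2 * r := by
      have e1 : i₂ * b = i₁ * b + j * b := by rw [← hi₁j]; ring
      omega
    have hjD : j ≤ D := by
      have hjbR : ((j:ℝ) + 1) * b ≤ 2 * r := by
        have : ((j * b + b : ℕ) : ℝ) ≤ ((2 * r : ℕ) : ℝ) := by exact_mod_cast hjb
        push_cast at this
        nlinarith
      have hC : ((j:ℝ) + 1) * (δ₀ * r) < ((j:ℝ) + 1) * (8 * b) :=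
        mul_lt_mul_of_pos_left hblow (by positivity)
      have hD8 : ((j:ℝ) + 1) * (8 * b) ≤ 16 * r := by
        have h8 := mul_le_mul_of_nonneg_left hjbR (by norm_num : (0:ℝ) ≤ 8)
        linarith
      have hF : ((j:ℝ) + 1) * δ₀ < 16 := by
        have hE : (((j:ℝ) + 1) * δ₀) * r < 16 * r := by nlinarith [hC, hD8]
        exact lt_of_mul_lt_mul_right (by linarith) (le_of_lt hrR)
      have hj16 : (j:ℝ) + 1 < 16 / δ₀ := by
        rw [lt_div_iff₀ h0]
        linarith
      have h16D : 16 / δ₀ ≤ (D:ℝ) := by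
        have ha : 16 / δ₀ ≤ 32 / δ₀ := by gcongr; norm_num
        linarith
      have : (j:ℝ) < D := by linarith
      have : j < D := by exact_mod_cast this
      omega
    -- k ≤ K
    have hkK : k ≤ Nat.log 2 n := by
      have hbn : b ≤ n := by
        have hqr : (q:ℝ) ≤ r := by nlinarith
        have : q ≤ r := by exact_mod_cast hqr
        omega
      rw [hb] at hbn
      exact (Nat.le_log_iff_pow_le (by norm_num) (by omega)).mpr hbn
    -- apply the expander
    set S := (W.filter fun x => (x - 1) / b = i₁).image (fun x => x - (i₁ * b + 1)) with hS
    set T := (X.filter fun x => (x - 1) / b = i₂).image (fun x => x - (i₂ * b + 1)) with hT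
    have hblockW : ∀ x ∈ W.filter (fun x => (x - 1) / b = i₁), i₁ * b + 1 ≤ x ∧ x ≤ i₁ * b + b := by
      intro x hx
      rw [Finset.mem_filter] at hx
      have hxI := hW hx.1
      rw [Finset.mem_Icc] at hxI
      have hx1 : 1 ≤ x := by omega
      have h1 : i₁ * b ≤ x - 1 := hx.2 ▸ Nat.div_mul_le_self _ _
      have h2 : x - 1 < i₁ * b + b := by
        rw [← hx.2]
        exact lt_div_mul_add (x - 1) b (by omega)
      omega
    have hblockX : ∀ x ∈ X.filter (fun x => (x - 1) / b = i₂), i₂ * b + 1 ≤ x ∧ x ≤ i₂ * b + b := by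
      intro x hx
      rw [Finset.mem_filter] at hx
      have hxI := hX hx.1
      rw [Finset.mem_Icc] at hxI
      have hx1 : 1 ≤ x := by omega
      have h1 : i₂ * b ≤ x - 1 := hx.2 ▸ Nat.div_mul_le_self _ _
      have h2 : x - 1 < i₂ * b + b := by
        rw [← hx.2]
        exact lt_div_mul_add (x - 1) b (by omega)
      omega
    have hSsub : S ⊆ Finset.range b := by
      rw [hS]
      intro y hy
      rw [Finset.mem_image] at hy
      obtain ⟨x, hx, rfl⟩ := hy
      have := hblockW x hx
      rw [Finset.mem_range]
      omega
    have hTsub : T ⊆ Finset.range b := by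
      rw [hT]
      intro y hy
      rw [Finset.mem_image] at hy
      obtain ⟨x, hx, rfl⟩ := hy
      have := hblockX x hx
      rw [Finset.mem_range]
      omega
    have hScard : (δ₀ / 2) * (b:ℕ) ≤ (S.card : ℝ) := by
      rw [hS, Finset.card_image_of_injOn]
      · exact hWd
      · intro x hx y hy hxy
        have h1 := hblockW x (by exact_mod_cast hx)
        have h2 := hblockW y (by exact_mod_cast hy)
        have hxy' : x - (i₁ * b + 1) = y - (i₁ * b + 1) := hxy
        omega
    have hTcard : (δ₀ / 2) * (b:ℕ) ≤ (T.card : ℝ) := by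
      rw [hT, Finset.card_image_of_injOn]
      · exact hXd
      · intro x hx y hy hxy
        have h1 := hblockX x (by exact_mod_cast hx)
        have h2 := hblockX y (by exact_mod_cast hy)
        have hxy' : x - (i₂ * b + 1) = y - (i₂ * b + 1) := hxy
        omega
    obtain ⟨p, hp, hpS, hpT⟩ := hHexp k S T hSsub hTsub hScard hTcard
    rw [hS, Finset.mem_image] at hpS
    obtain ⟨x, hxW, hxp⟩ := hpS
    rw [hT, Finset.mem_image] at hpT
    obtain ⟨y, hyX, hyp⟩ := hpT
    have hxblk := hblockW x hxW
    have hyblk := hblockX y hyX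
    rw [Finset.mem_filter] at hxW hyX
    refine ⟨x, hxW.1, y, hyX.1, Finset.mem_union_right _ ?_⟩
    unfold expE
    rw [Finset.mem_biUnion]
    refine ⟨k, Finset.mem_range.mpr (by omega), ?_⟩
    rw [Finset.mem_biUnion]
    refine ⟨(i₁, j), ?_, ?_⟩
    · rw [Finset.mem_product, Finset.mem_range, Finset.mem_Icc]
      refine ⟨?_, hj1, hjD⟩
      have : i₁ * b + 1 ≤ n := by omega
      have hi₁b : i₁ ≤ i₁ * b := Nat.le_mul_of_pos_right _ (by omega)
      omega
    · have hcond : (i₁ + j + 1) * 2 ^ k ≤ n := by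
        have : (i₁ + j + 1) * b = i₂ * b + b := by rw [hi₁j]; ring
        rw [← hb]
        omega
      rw [if_pos hcond]
      unfold slotE
      rw [Finset.mem_image]
      refine ⟨p, hp, ?_⟩
      have hpv := hHval k p hp
      rw [← hb]
      have e1 : i₁ * b + 1 + p.1 = x := by omega
      have e2 : (i₁ + j) * b + 1 + p.2 = y := by
        rw [hi₁j]
        omega
      rw [e1, e2]

lemma shortE_valid (n M : ℕ) : ∀ e ∈ shortE n M, 1 ≤ e.1 ∧ e.1 < e.2 ∧ e.2 ≤ n := by
  intro e he
  unfold shortE at he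
  rw [Finset.mem_filter, Finset.mem_product, Finset.mem_Icc, Finset.mem_Icc] at he
  omega

lemma expE_valid (H : ℕ → Finset (ℕ × ℕ)) (n D K : ℕ)
    (hval : ∀ k, ∀ e ∈ H k, e.1 < 2 ^ k ∧ e.2 < 2 ^ k) :
    ∀ e ∈ expE H n D K, 1 ≤ e.1 ∧ e.1 < e.2 ∧ e.2 ≤ n := by
  intro e he
  unfold expE at he
  rw [Finset.mem_biUnion] at he
  obtain ⟨k, _, he⟩ := he
  rw [Finset.mem_biUnion] at he
  obtain ⟨ij, hij, he⟩ := he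
  rw [Finset.mem_product, Finset.mem_Icc] at hij
  by_cases hc : (ij.1 + ij.2 + 1) * 2 ^ k ≤ n
  · rw [if_pos hc] at he
    unfold slotE at he
    rw [Finset.mem_image] at he
    obtain ⟨p, hp, rfl⟩ := he
    obtain ⟨hp1, hp2⟩ := hval k p hp
    have hj1 : 1 ≤ ij.2 := hij.2.1
    have e1 : (ij.1 + ij.2) * 2 ^ k = ij.1 * 2 ^ k + ij.2 * 2 ^ k := by ring
    have e2 : (ij.1 + ij.2 + 1) * 2 ^ k = (ij.1 + ij.2) * 2 ^ k + 2 ^ k := by ring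
    have e3 : 2 ^ k ≤ ij.2 * 2 ^ k := Nat.le_mul_of_pos_left _ (by omega)
    refine ⟨by omega, by omega, by omega⟩
  · rw [if_neg hc] at he
    simp at he


/-- For every `δ > 0` there is a constant `c > 0` such that, for every `n ≥ 2`,
some DAG on `[n]` is a `δ`-local expander with indegree and outdegree at most
`c·log₂ n` at every node. -/
theorem local_expander_exists (δ : ℝ) (hδ : 0 < δ) :
    ∃ c : ℝ, 0 < c ∧ ∀ n : ℕ, 2 ≤ n →
      ∃ E : Finset (ℕ × ℕ),
        (∀ e ∈ E, 1 ≤ e.1 ∧ e.1 < e.2 ∧ e.2 ≤ n) ∧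
        (∀ v ∈ Finset.Icc 1 n, LocalExpansionE n E δ v) ∧
        (∀ v : ℕ, (((E.filter fun e => e.2 = v).card : ℝ)) ≤ c * Real.logb 2 n) ∧
        (∀ v : ℕ, (((E.filter fun e => e.1 = v).card : ℝ)) ≤ c * Real.logb 2 n) := by
  classical
  set δ₀ := min δ 1 with hδ₀def
  have hδ₀0 : 0 < δ₀ := lt_min hδ one_pos
  have hδ₀1 : δ₀ ≤ 1 := min_le_right _ _
  have hδ₀δ : δ₀ ≤ δ := min_le_left _ _
  set γ := δ₀ / 2 with hγdef
  have hγ0 : 0 < γ := by positivity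
  have hγ1 : γ ≤ 1 / 2 := by rw [hγdef]; linarith
  set d := ⌈4 / γ ^ 2⌉₊ with hddef
  have hd : 4 / γ ^ 2 ≤ (d : ℝ) := Nat.le_ceil _
  set D := ⌈32 / δ₀⌉₊ with hDdef
  have hD : 32 / δ₀ ≤ (D : ℝ) := Nat.le_ceil _
  have hD1 : 1 ≤ D := Nat.one_le_ceil_iff.mpr (by positivity)
  choose H hH using fun k : ℕ => exists_expander γ hγ0 hγ1 d hd (2 ^ k) Nat.one_le_two_pow
  refine ⟨(D : ℝ) + 2 * D * d + 1, by positivity, ?_⟩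
  intro n hn
  set K := Nat.log 2 n with hK
  set E := shortE n D ∪ expE H n D K with hE
  have hHval : ∀ k, ∀ e ∈ H k, e.1 < 2 ^ k ∧ e.2 < 2 ^ k := fun k => (hH k).1
  have hHexp : ∀ k, ∀ S T : Finset ℕ, S ⊆ Finset.range (2 ^ k) → T ⊆ Finset.range (2 ^ k) →
      (δ₀ / 2) * (2 ^ k : ℕ) ≤ (S.card : ℝ) → (δ₀ / 2) * (2 ^ k : ℕ) ≤ (T.card : ℝ) →
      ∃ p ∈ H k, p.1 ∈ S ∧ p.2 ∈ T := by
    intro k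
    have := (hH k).2.2.2
    rw [hγdef] at this
    exact this
  -- log bounds
  have hn0 : (0:ℝ) < n := by positivity
  have hlog1 : (1:ℝ) ≤ Real.logb 2 n := by
    rw [show (1:ℝ) = Real.logb 2 2 from (Real.logb_self_eq_one (by norm_num)).symm]
    exact Real.logb_le_logb_of_le (by norm_num) (by norm_num) (by exact_mod_cast hn)
  have hlogK : (K : ℝ) ≤ Real.logb 2 n := by
    have h2K : (2:ℕ) ^ K ≤ n := Nat.pow_log_le_self 2 (by omega)
    have h2KR : ((2:ℝ)) ^ K ≤ (n : ℝ) := by exact_mod_cast h2K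
    calc (K : ℝ) = Real.logb 2 ((2:ℝ) ^ K) := by
          rw [Real.logb_pow, Real.logb_self_eq_one (by norm_num)]; ring
      _ ≤ Real.logb 2 n := Real.logb_le_logb_of_le (by norm_num) (by positivity) h2KR
  have hdegcast : ((D : ℝ) + ((K:ℝ) + 1) * ((D:ℝ) * (d:ℝ)))
      ≤ ((D : ℝ) + 2 * D * d + 1) * Real.logb 2 n := by
    have hDR : (0:ℝ) ≤ D := by positivity
    have hdR : (0:ℝ) ≤ d := by positivity
    have h1 : (D:ℝ) ≤ (D:ℝ) * Real.logb 2 n := le_mul_of_one_le_right hDR hlog1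
    have h2 : ((K:ℝ) + 1) * ((D:ℝ) * (d:ℝ)) ≤ (2 * Real.logb 2 n) * ((D:ℝ) * (d:ℝ)) := by
      apply mul_le_mul_of_nonneg_right _ (by positivity)
      linarith
    have h3 : (0:ℝ) ≤ Real.logb 2 n := by linarith
    nlinarith
  refine ⟨E, ?_, ?_, ?_, ?_⟩
  · intro e he
    rw [hE, Finset.mem_union] at he
    rcases he with he | he
    · exact shortE_valid n D e he
    · exact expE_valid H n D K hHval e he
  · intro v hv
    rw [Finset.mem_Icc] at hv
    intro r hr
    constructor
    · intro hle W hWsub X hXsub hWc hXc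
      have hWc' : δ₀ * r ≤ (W.card : ℝ) := by
        have : δ₀ * r ≤ δ * r := mul_le_mul_of_nonneg_right hδ₀δ (by positivity)
        linarith
      have hXc' : δ₀ * r ≤ (X.card : ℝ) := by
        have : δ₀ * r ≤ δ * r := mul_le_mul_of_nonneg_right hδ₀δ (by positivity)
        linarith
      exact forward_exp δ₀ hδ₀0 hδ₀1 D hD H hHval hHexp n hn v r hv.1 hr hle
        W X hWsub hXsub hWc' hXc'
    · intro h2r Y hYsub Z hZsub hYc hZc
      have hYc' : δ₀ * r ≤ (Y.card : ℝ) := by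
        have : δ₀ * r ≤ δ * r := mul_le_mul_of_nonneg_right hδ₀δ (by positivity)
        linarith
      have hZc' : δ₀ * r ≤ (Z.card : ℝ) := by
        have : δ₀ * r ≤ δ * r := mul_le_mul_of_nonneg_right hδ₀δ (by positivity)
        linarith
      have hv1 : 1 ≤ v - 2 * r + 1 := by omega
      have hvn : (v - 2 * r + 1) + 2 * r - 1 ≤ n := by omega
      have e1 : (v - 2 * r + 1) + r - 1 = v - r := by omega
      have e2 : (v - 2 * r + 1) + r = v - r + 1 := by omega
      have e3 : (v - 2 * r + 1) + 2 * r - 1 = v := by omega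
      have hZsub' : Z ⊆ Finset.Icc (v - 2 * r + 1) ((v - 2 * r + 1) + r - 1) := by
        rw [e1]; exact hZsub
      have hYsub' : Y ⊆ Finset.Icc ((v - 2 * r + 1) + r) ((v - 2 * r + 1) + 2 * r - 1) := by
        rw [e2, e3]; exact hYsub
      exact forward_exp δ₀ hδ₀0 hδ₀1 D hD H hHval hHexp n hn (v - 2 * r + 1) r hv1 hr hvn
        Z Y hZsub' hYsub' hZc' hYc'
  · intro v
    have hcard : (E.filter fun e => e.2 = v).card ≤ D + (K + 1) * (D * d) := by
      rw [hE, Finset.filter_union]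
      calc _ ≤ ((shortE n D).filter fun e => e.2 = v).card
            + ((expE H n D K).filter fun e => e.2 = v).card := Finset.card_union_le _ _
        _ ≤ D + (K + 1) * (D * d) := by
            have h1 := shortE_deg_snd n D v hD1
            have h2 := expE_deg_snd H n D K d v (fun k e he => (hHval k e he).2)
              (fun k => (hH k).2.2.1)
            omega
    calc ((E.filter fun e => e.2 = v).card : ℝ)
        ≤ ((D + (K + 1) * (D * d) : ℕ) : ℝ) := by exact_mod_cast hcard
      _ = (D : ℝ) + ((K:ℝ) + 1) * ((D:ℝ) * (d:ℝ)) := by push_cast; ring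
      _ ≤ ((D : ℝ) + 2 * D * d + 1) * Real.logb 2 n := hdegcast
  · intro v
    have hcard : (E.filter fun e => e.1 = v).card ≤ D + (K + 1) * (D * d) := by
      rw [hE, Finset.filter_union]
      calc _ ≤ ((shortE n D).filter fun e => e.1 = v).card
            + ((expE H n D K).filter fun e => e.1 = v).card := Finset.card_union_le _ _
        _ ≤ D + (K + 1) * (D * d) := by
            have h1 := shortE_deg_fst n D v hD1
            have h2 := expE_deg_fst H n D K d v (fun k e he => (hHval k e he).1)
              (fun k => (hH k).2.1)
            omega
    calc ((E.filter fun e => e.1 = v).card : ℝ)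
        ≤ ((D + (K + 1) * (D * d) : ℕ) : ℝ) := by exact_mod_cast hcard
      _ = (D : ℝ) + ((K:ℝ) + 1) * ((D:ℝ) * (d:ℝ)) := by push_cast; ring
      _ ≤ ((D : ℝ) + 2 * D * d + 1) * Real.logb 2 n := hdegcast
end

section
/- Let 0 < δ < 1/16 and let G be a DAG on [t] that has 4δ-local expansion around a node u. Then for every integer i ≥ 0 with u + 2^i − 1 ≤ t, the number of nodes in the interval [u, u + 2^i − 1] that are reachable from u by a directed path in G (counting u itself as reachable) is at least (3/4)·2^i. Symmetrically, for every integer i ≥ 0 with u − 2^i + 1 ≥ 1, the number of nodes in [u − 2^i + 1, u] from which u is reachable by a directed path in G is at least (3/4)·2^i. -/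
/-- A DAG (edge relation `E` on `[t]`, edges go from smaller to larger) has
`δ`-local expansion around node `v`. -/
def LocalExpansion (t : ℕ) (E : ℕ → ℕ → Prop) (δ : ℝ) (v : ℕ) : Prop :=
  ∀ r : ℕ, 1 ≤ r →
    (v + 2 * r - 1 ≤ t →
      ∀ W ⊆ Finset.Icc v (v + r - 1), ∀ X ⊆ Finset.Icc (v + r) (v + 2 * r - 1),
        δ * r ≤ (W.card : ℝ) → δ * r ≤ (X.card : ℝ) →
          ∃ a ∈ W, ∃ b ∈ X, E a b) ∧
    (2 * r ≤ v →
      ∀ Y ⊆ Finset.Icc (v - r + 1) v, ∀ Z ⊆ Finset.Icc (v - 2 * r + 1) (v - r),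
        δ * r ≤ (Y.card : ℝ) → δ * r ≤ (Z.card : ℝ) →
          ∃ a ∈ Z, ∃ b ∈ Y, E a b)

/-- If `G` has `4δ`-local expansion around `u` (with `δ < 1/16`), then in every
dyadic interval `[u, u+2^i-1]` at least `(3/4)·2^i` nodes are reachable from `u`,
and in every dyadic interval `[u-2^i+1, u]` at least `(3/4)·2^i` nodes reach `u`. -/
theorem expander_reachable (t : ℕ) (E : ℕ → ℕ → Prop)
    (hE : ∀ a b, E a b → 1 ≤ a ∧ a < b ∧ b ≤ t)
    (δ : ℝ) (hδ0 : 0 < δ) (hδ : δ < 1 / 16)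
    (u : ℕ) (hu : u ∈ Finset.Icc 1 t)
    (hL : LocalExpansion t E (4 * δ) u) :
    (∀ i : ℕ, u + 2 ^ i - 1 ≤ t →
      (3 / 4 : ℝ) * 2 ^ i ≤
        (({w : ℕ | w ∈ Finset.Icc u (u + 2 ^ i - 1) ∧
            Relation.ReflTransGen E u w} : Set ℕ).ncard : ℝ)) ∧
    (∀ i : ℕ, 2 ^ i ≤ u →
      (3 / 4 : ℝ) * 2 ^ i ≤
        (({w : ℕ | w ∈ Finset.Icc (u - 2 ^ i + 1) u ∧
            Relation.ReflTransGen E w u} : Set ℕ).ncard : ℝ)) := by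
  classical
  obtain ⟨hu1, hut⟩ := Finset.mem_Icc.mp hu
  set P : ℕ → Prop := fun w => Relation.ReflTransGen E u w with hP
  set Q : ℕ → Prop := fun w => Relation.ReflTransGen E w u with hQ
  have fwd : ∀ i : ℕ, u + 2 ^ i - 1 ≤ t →
      (3 / 4 : ℝ) * 2 ^ i ≤
        (((Finset.Icc u (u + 2 ^ i - 1)).filter P).card : ℝ) := by
    intro i
    induction i with
    | zero =>
      intro _
      have h1 : u + 2 ^ 0 - 1 = u := by omega
      rw [h1, Finset.Icc_self]
      have hmem : u ∈ ({u} : Finset ℕ).filter P := by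
        simp [hP, Relation.ReflTransGen.refl]
      have h2 : 1 ≤ (({u} : Finset ℕ).filter P).card :=
        Finset.card_pos.mpr ⟨u, hmem⟩
      have h3 : (1 : ℝ) ≤ ((({u} : Finset ℕ).filter P).card : ℝ) := by
        exact_mod_cast h2
      norm_num
      linarith
    | succ i ih =>
      intro hi
      have hrpos : 1 ≤ 2 ^ i := Nat.one_le_two_pow
      have h2r : 2 ^ (i + 1) = 2 * 2 ^ i := by rw [pow_succ]; ring
      rw [h2r] at hi
      have hi' : u + 2 ^ i - 1 ≤ t := by omega
      have hA := ih hi'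
      set r : ℕ := 2 ^ i with hr
      have hrcast : (r : ℝ) = (2 : ℝ) ^ i := by rw [hr]; push_cast; ring
      rw [← hrcast] at hA
      set A := (Finset.Icc u (u + r - 1)).filter P with hAdef
      set B := (Finset.Icc (u + r) (u + 2 * r - 1)).filter P with hBdef
      set Bc := (Finset.Icc (u + r) (u + 2 * r - 1)).filter (fun w => ¬ P w) with hBcdef
      have hrR : (0 : ℝ) < (r : ℝ) := by exact_mod_cast hrpos
      -- |Bc| < 4δ r
      have hBc : ((Bc.card : ℝ)) < 4 * δ * r := by
        by_contra hcon
        push_neg at hcon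
        have hWcard : (4 * δ) * r ≤ (A.card : ℝ) := by
          have h4 : 4 * δ * r ≤ (3 / 4 : ℝ) * r := by nlinarith
          calc (4 * δ) * r ≤ (3/4 : ℝ) * r := h4
            _ ≤ (A.card : ℝ) := hA
        obtain ⟨a, ha, b, hb, hab⟩ :=
          (hL r hrpos).1 hi A (Finset.filter_subset _ _) Bc (Finset.filter_subset _ _)
            hWcard (by linarith)
        have hPa : P a := (Finset.mem_filter.mp ha).2
        have hPb : ¬ P b := (Finset.mem_filter.mp hb).2
        exact hPb (Relation.ReflTransGen.tail hPa hab)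
      -- |B| + |Bc| = r
      have hIcard : (Finset.Icc (u + r) (u + 2 * r - 1)).card = r := by
        rw [Nat.card_Icc]; omega
      have hBBc : B.card + Bc.card = r := by
        rw [hBdef, hBcdef, Finset.card_filter_add_card_filter_not, hIcard]
      -- split the big interval
      have hsplit : Finset.Icc u (u + 2 * r - 1) =
          Finset.Icc u (u + r - 1) ∪ Finset.Icc (u + r) (u + 2 * r - 1) := by
        ext x
        simp only [Finset.mem_union, Finset.mem_Icc]
        omega
      have hdisj : Disjoint A B := by
        rw [Finset.disjoint_left]
        intro x hx hx'
        have h1 := Finset.mem_Icc.mp (Finset.mem_of_mem_filter x hx)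
        have h2 := Finset.mem_Icc.mp (Finset.mem_of_mem_filter x hx')
        omega
      have hcard : ((Finset.Icc u (u + 2 * r - 1)).filter P).card = A.card + B.card := by
        rw [hsplit, Finset.filter_union, Finset.card_union_of_disjoint hdisj]
      rw [h2r, hcard]
      have hBR : (B.card : ℝ) + (Bc.card : ℝ) = (r : ℝ) := by exact_mod_cast hBBc
      have hpowR : (2 : ℝ) ^ (i + 1) = 2 * (r : ℝ) := by
        rw [pow_succ, ← hrcast]; ring
      push_cast
      rw [hpowR]
      nlinarith [mul_pos (by linarith : (0:ℝ) < 1/16 - δ) hrR]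
  have bwd : ∀ i : ℕ, 2 ^ i ≤ u →
      (3 / 4 : ℝ) * 2 ^ i ≤
        (((Finset.Icc (u - 2 ^ i + 1) u).filter Q).card : ℝ) := by
    intro i
    induction i with
    | zero =>
      intro _
      have h1 : u - 2 ^ 0 + 1 = u := by omega
      rw [h1, Finset.Icc_self]
      have hmem : u ∈ ({u} : Finset ℕ).filter Q := by
        simp [hQ, Relation.ReflTransGen.refl]
      have h2 : 1 ≤ (({u} : Finset ℕ).filter Q).card :=
        Finset.card_pos.mpr ⟨u, hmem⟩
      have h3 : (1 : ℝ) ≤ ((({u} : Finset ℕ).filter Q).card : ℝ) := by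
        exact_mod_cast h2
      norm_num
      linarith
    | succ i ih =>
      intro hi
      have hrpos : 1 ≤ 2 ^ i := Nat.one_le_two_pow
      have h2r : 2 ^ (i + 1) = 2 * 2 ^ i := by rw [pow_succ]; ring
      rw [h2r] at hi
      have hi' : 2 ^ i ≤ u := by omega
      have hA := ih hi'
      set r : ℕ := 2 ^ i with hr
      have hrcast : (r : ℝ) = (2 : ℝ) ^ i := by rw [hr]; push_cast; ring
      rw [← hrcast] at hA
      set A := (Finset.Icc (u - r + 1) u).filter Q with hAdef
      set B := (Finset.Icc (u - 2 * r + 1) (u - r)).filter Q with hBdef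
      set Bc := (Finset.Icc (u - 2 * r + 1) (u - r)).filter (fun w => ¬ Q w) with hBcdef
      have hrR : (0 : ℝ) < (r : ℝ) := by exact_mod_cast hrpos
      have hBc : ((Bc.card : ℝ)) < 4 * δ * r := by
        by_contra hcon
        push_neg at hcon
        have hWcard : (4 * δ) * r ≤ (A.card : ℝ) := by
          have h4 : 4 * δ * r ≤ (3 / 4 : ℝ) * r := by nlinarith
          calc (4 * δ) * r ≤ (3/4 : ℝ) * r := h4
            _ ≤ (A.card : ℝ) := hA
        obtain ⟨a, ha, b, hb, hab⟩ :=
          (hL r hrpos).2 hi A (Finset.filter_subset _ _) Bc (Finset.filter_subset _ _)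
            hWcard (by linarith)
        have hQa : ¬ Q a := (Finset.mem_filter.mp ha).2
        have hQb : Q b := (Finset.mem_filter.mp hb).2
        exact hQa (Relation.ReflTransGen.head hab hQb)
      have hIcard : (Finset.Icc (u - 2 * r + 1) (u - r)).card = r := by
        rw [Nat.card_Icc]; omega
      have hBBc : B.card + Bc.card = r := by
        rw [hBdef, hBcdef, Finset.card_filter_add_card_filter_not, hIcard]
      have hsplit : Finset.Icc (u - 2 * r + 1) u =
          Finset.Icc (u - 2 * r + 1) (u - r) ∪ Finset.Icc (u - r + 1) u := by
        ext x
        simp only [Finset.mem_union, Finset.mem_Icc]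
        omega
      have hdisj : Disjoint B A := by
        rw [Finset.disjoint_left]
        intro x hx hx'
        have h1 := Finset.mem_Icc.mp (Finset.mem_of_mem_filter x hx)
        have h2 := Finset.mem_Icc.mp (Finset.mem_of_mem_filter x hx')
        omega
      have hcard : ((Finset.Icc (u - 2 * r + 1) u).filter Q).card = B.card + A.card := by
        rw [hsplit, Finset.filter_union, Finset.card_union_of_disjoint hdisj]
      rw [h2r, hcard]
      have hBR : (B.card : ℝ) + (Bc.card : ℝ) = (r : ℝ) := by exact_mod_cast hBBc
      have hpowR : (2 : ℝ) ^ (i + 1) = 2 * (r : ℝ) := by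
        rw [pow_succ, ← hrcast]; ring
      push_cast
      rw [hpowR]
      nlinarith [mul_pos (by linarith : (0:ℝ) < 1/16 - δ) hrR]
  constructor
  · intro i hi
    have hset : ({w : ℕ | w ∈ Finset.Icc u (u + 2 ^ i - 1) ∧
        Relation.ReflTransGen E u w} : Set ℕ) =
        ↑((Finset.Icc u (u + 2 ^ i - 1)).filter P) := by
      ext w; simp [hP, Finset.mem_filter]
    rw [hset, Set.ncard_coe_finset]
    exact fwd i hi
  · intro i hi
    have hset : ({w : ℕ | w ∈ Finset.Icc (u - 2 ^ i + 1) u ∧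
        Relation.ReflTransGen E w u} : Set ℕ) =
        ↑((Finset.Icc (u - 2 ^ i + 1) u).filter Q) := by
      ext w; simp [hQ, Finset.mem_filter]
    rw [hset, Set.ncard_coe_finset]
    exact bwd i hi
end

section
/- Let 0 < δ < 1/16, let G be a DAG on [t], and let u, v ∈ [t] satisfy v = u + 2r − 1 for some integer r ≥ 1. If G has 4δ-local expansion around u and around v, then G contains a directed path from u to v. -/
/-- If `0 < δ < 1/16`, `v = u + 2r - 1`, and `G` has `4δ`-local expansion around
both `u` and `v`, then `G` contains a directed path from `u` to `v`. -/
theorem expansion_connected (t : ℕ) (E : ℕ → ℕ → Prop)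
    (hE : ∀ a b, E a b → 1 ≤ a ∧ a < b ∧ b ≤ t)
    (δ : ℝ) (hδ0 : 0 < δ) (hδ : δ < 1 / 16)
    (u v r : ℕ) (hr : 1 ≤ r)
    (hu : u ∈ Finset.Icc 1 t) (hv : v ∈ Finset.Icc 1 t)
    (hvu : v = u + 2 * r - 1)
    (hLu : LocalExpansion t E (4 * δ) u) (hLv : LocalExpansion t E (4 * δ) v) :
    Relation.ReflTransGen E u v := by
  classical
  simp only [Finset.mem_Icc] at hu hv
  obtain ⟨hu1, hut⟩ := hu
  obtain ⟨hv1, hvt⟩ := hv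
  have hδ'0 : (0:ℝ) < 4 * δ := by linarith
  have hδ'4 : 4 * δ < 1/4 := by linarith
  set reach := fun x => Relation.ReflTransGen E u x with hreach
  set coreach := fun x => Relation.ReflTransGen E x v with hcoreach
  -- forward: reachable set fills a 4δ fraction of [u, u+s-1]
  have key1 : ∀ s, 1 ≤ s → s ≤ r →
      4 * δ * s ≤ (((Finset.Icc u (u + s - 1)).filter reach).card : ℝ) := by
    intro s
    induction s using Nat.strong_induction_on with
    | _ s ih =>
      intro hs1 hsr
      rcases Nat.lt_or_ge s 2 with hs2 | hs2
      · -- s = 1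
        have hseq : s = 1 := by omega
        subst hseq
        have hmem : u ∈ (Finset.Icc u (u + 1 - 1)).filter reach := by
          simp only [Finset.mem_filter, Finset.mem_Icc]
          exact ⟨⟨le_refl u, by omega⟩, Relation.ReflTransGen.refl⟩
        have hc : 1 ≤ ((Finset.Icc u (u + 1 - 1)).filter reach).card :=
          Finset.card_pos.mpr ⟨u, hmem⟩
        have hc' : (1:ℝ) ≤ (((Finset.Icc u (u + 1 - 1)).filter reach).card : ℝ) := by
          exact_mod_cast hc
        push_cast
        simp only [Nat.add_sub_cancel] at hc' ⊢
        linarith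
      · -- s ≥ 2
        set s' := (s + 1) / 2 with hs'def
        have hs'1 : 1 ≤ s' := by omega
        have hs'lt : s' < s := by omega
        have h2s' : s ≤ 2 * s' := by omega
        have h2s'' : 2 * s' ≤ s + 1 := by omega
        have hW := ih s' hs'lt hs'1 (le_trans (le_of_lt hs'lt) hsr)
        set W := (Finset.Icc u (u + s' - 1)).filter reach with hWdef
        set X := (Finset.Icc (u + s') (u + 2 * s' - 1)).filter (fun x => ¬ reach x) with hXdef
        have hts' : u + 2 * s' - 1 ≤ t := by omega
        have hXlt : (X.card : ℝ) < 4 * δ * s' := by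
          by_contra hX
          push_neg at hX
          obtain ⟨a, ha, b, hb, hab⟩ := (hLu s' hs'1).1 hts' W
            (Finset.filter_subset _ _) X (Finset.filter_subset _ _) hW hX
          have hra : reach a := (Finset.mem_filter.mp ha).2
          have hnb : ¬ reach b := (Finset.mem_filter.mp hb).2
          exact hnb (hra.tail hab)
        set W2 := (Finset.Icc (u + s') (u + 2 * s' - 1)).filter reach with hW2def
        have hcard2 : W2.card + X.card = s' := by
          rw [hW2def, hXdef, Finset.card_filter_add_card_filter_not,
            Nat.card_Icc]
          omega
        -- second-interval count
        set B2 := (Finset.Icc (u + s') (u + s - 1)).filter reach with hB2def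
        have hsubW2 : W2 ⊆ B2 ∪ Finset.Icc (u + s) (u + 2 * s' - 1) := by
          intro x hx
          simp only [hW2def, hB2def, Finset.mem_filter, Finset.mem_Icc,
            Finset.mem_union] at hx ⊢
          rcases le_or_gt x (u + s - 1) with h | h
          · exact Or.inl ⟨⟨hx.1.1, h⟩, hx.2⟩
          · exact Or.inr ⟨by omega, hx.1.2⟩
        have hw2le : W2.card ≤ B2.card + (2 * s' - s) := by
          calc W2.card ≤ (B2 ∪ Finset.Icc (u + s) (u + 2 * s' - 1)).card :=
                Finset.card_le_card hsubW2
            _ ≤ B2.card + (Finset.Icc (u + s) (u + 2 * s' - 1)).card :=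
                Finset.card_union_le _ _
            _ = B2.card + (2 * s' - s) := by rw [Nat.card_Icc]; omega
        have hsplit : (Finset.Icc u (u + s - 1)).filter reach = W ∪ B2 := by
          rw [hWdef, hB2def, ← Finset.filter_union]
          congr 1
          ext x
          simp only [Finset.mem_Icc, Finset.mem_union]
          omega
        have hdisj : Disjoint W B2 := by
          rw [Finset.disjoint_left]
          intro x hx hx'
          simp only [hWdef, hB2def, Finset.mem_filter, Finset.mem_Icc] at hx hx'
          omega
        have hcardsplit : ((Finset.Icc u (u + s - 1)).filter reach).card
            = W.card + B2.card := by
          rw [hsplit, Finset.card_union_of_disjoint hdisj]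
        rw [hcardsplit]
        -- real arithmetic
        have hd : (2 * s' - s : ℕ) ≤ 1 := by omega
        have hmul : 4 * δ * (s:ℝ) < (1/4) * (s:ℝ) := by
          have hs0 : (0:ℝ) < (s:ℝ) := by exact_mod_cast (by omega : 0 < s)
          exact mul_lt_mul_of_pos_right hδ'4 hs0
        have hc2 : (W2.card : ℝ) + (X.card : ℝ) = (s' : ℝ) := by exact_mod_cast hcard2
        have hc3 : (W2.card : ℝ) ≤ (B2.card : ℝ) + ((2 * s' - s : ℕ) : ℝ) := by
          exact_mod_cast hw2le
        have hc4 : ((2 * s' - s : ℕ) : ℝ) = 2 * (s':ℝ) - (s:ℝ) := by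
          push_cast [Nat.cast_sub h2s']
          ring
        have hc5 : ((2 * s' - s : ℕ) : ℝ) ≤ 1 := by exact_mod_cast hd
        have hsge : (2:ℝ) ≤ (s:ℝ) := by exact_mod_cast hs2
        have hs'le : 2 * (s':ℝ) ≤ (s:ℝ) + 1 := by exact_mod_cast h2s''
        push_cast
        linarith
  -- backward: coreachable set fills a 4δ fraction of [v-s+1, v]
  have key2 : ∀ s, 1 ≤ s → s ≤ r →
      4 * δ * s ≤ (((Finset.Icc (v - s + 1) v).filter coreach).card : ℝ) := by
    intro s
    induction s using Nat.strong_induction_on with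
    | _ s ih =>
      intro hs1 hsr
      rcases Nat.lt_or_ge s 2 with hs2 | hs2
      · have hseq : s = 1 := by omega
        subst hseq
        have hmem : v ∈ (Finset.Icc (v - 1 + 1) v).filter coreach := by
          simp only [Finset.mem_filter, Finset.mem_Icc]
          exact ⟨⟨by omega, le_refl v⟩, Relation.ReflTransGen.refl⟩
        have hc : 1 ≤ ((Finset.Icc (v - 1 + 1) v).filter coreach).card :=
          Finset.card_pos.mpr ⟨v, hmem⟩
        have hc' : (1:ℝ) ≤ (((Finset.Icc (v - 1 + 1) v).filter coreach).card : ℝ) := by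
          exact_mod_cast hc
        push_cast
        linarith
      · set s' := (s + 1) / 2 with hs'def
        have hs'1 : 1 ≤ s' := by omega
        have hs'lt : s' < s := by omega
        have h2s' : s ≤ 2 * s' := by omega
        have h2s'' : 2 * s' ≤ s + 1 := by omega
        have hY := ih s' hs'lt hs'1 (le_trans (le_of_lt hs'lt) hsr)
        set Y := (Finset.Icc (v - s' + 1) v).filter coreach with hYdef
        set Z := (Finset.Icc (v - 2 * s' + 1) (v - s')).filter (fun x => ¬ coreach x)
          with hZdef
        have hvs : 2 * s' ≤ v := by omega
        have hZlt : (Z.card : ℝ) < 4 * δ * s' := by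
          by_contra hZ
          push_neg at hZ
          obtain ⟨a, ha, b, hb, hab⟩ := (hLv s' hs'1).2 hvs Y
            (Finset.filter_subset _ _) Z (Finset.filter_subset _ _) hY hZ
          have hna : ¬ coreach a := (Finset.mem_filter.mp ha).2
          have hcb : coreach b := (Finset.mem_filter.mp hb).2
          exact hna (hcb.head hab)
        set Y2 := (Finset.Icc (v - 2 * s' + 1) (v - s')).filter coreach with hY2def
        have hcard2 : Y2.card + Z.card = s' := by
          rw [hY2def, hZdef, Finset.card_filter_add_card_filter_not,
            Nat.card_Icc]
          omega
        set B2 := (Finset.Icc (v - s + 1) (v - s')).filter coreach with hB2def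
        have hsubY2 : Y2 ⊆ B2 ∪ Finset.Icc (v - 2 * s' + 1) (v - s) := by
          intro x hx
          simp only [hY2def, hB2def, Finset.mem_filter, Finset.mem_Icc,
            Finset.mem_union] at hx ⊢
          rcases le_or_gt (v - s + 1) x with h | h
          · exact Or.inl ⟨⟨h, hx.1.2⟩, hx.2⟩
          · exact Or.inr ⟨hx.1.1, by omega⟩
        have hw2le : Y2.card ≤ B2.card + (2 * s' - s) := by
          calc Y2.card ≤ (B2 ∪ Finset.Icc (v - 2 * s' + 1) (v - s)).card :=
                Finset.card_le_card hsubY2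
            _ ≤ B2.card + (Finset.Icc (v - 2 * s' + 1) (v - s)).card :=
                Finset.card_union_le _ _
            _ = B2.card + (2 * s' - s) := by rw [Nat.card_Icc]; omega
        have hsplit : (Finset.Icc (v - s + 1) v).filter coreach = B2 ∪ Y := by
          rw [hB2def, hYdef, ← Finset.filter_union]
          congr 1
          ext x
          simp only [Finset.mem_Icc, Finset.mem_union]
          omega
        have hdisj : Disjoint B2 Y := by
          rw [Finset.disjoint_left]
          intro x hx hx'
          simp only [hYdef, hB2def, Finset.mem_filter, Finset.mem_Icc] at hx hx'
          omega
        have hcardsplit : ((Finset.Icc (v - s + 1) v).filter coreach).card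
            = B2.card + Y.card := by
          rw [hsplit, Finset.card_union_of_disjoint hdisj]
        rw [hcardsplit]
        have hd : (2 * s' - s : ℕ) ≤ 1 := by omega
        have hmul : 4 * δ * (s:ℝ) < (1/4) * (s:ℝ) := by
          have hs0 : (0:ℝ) < (s:ℝ) := by exact_mod_cast (by omega : 0 < s)
          exact mul_lt_mul_of_pos_right hδ'4 hs0
        have hc2 : (Y2.card : ℝ) + (Z.card : ℝ) = (s' : ℝ) := by exact_mod_cast hcard2
        have hc3 : (Y2.card : ℝ) ≤ (B2.card : ℝ) + ((2 * s' - s : ℕ) : ℝ) := by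
          exact_mod_cast hw2le
        have hc4 : ((2 * s' - s : ℕ) : ℝ) = 2 * (s':ℝ) - (s:ℝ) := by
          push_cast [Nat.cast_sub h2s']
          ring
        have hc5 : ((2 * s' - s : ℕ) : ℝ) ≤ 1 := by exact_mod_cast hd
        have hsge : (2:ℝ) ≤ (s:ℝ) := by exact_mod_cast hs2
        have hs'le : 2 * (s':ℝ) ≤ (s:ℝ) + 1 := by exact_mod_cast h2s''
        push_cast
        linarith
  -- final step: link the two sets with one expansion step at radius r around u
  have hW := key1 r hr (le_refl r)
  have hY := key2 r hr (le_refl r)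
  have hIcceq : Finset.Icc (v - r + 1) v = Finset.Icc (u + r) (u + 2 * r - 1) := by
    congr 1 <;> omega
  rw [hIcceq] at hY
  have htv : u + 2 * r - 1 ≤ t := by omega
  obtain ⟨a, ha, b, hb, hab⟩ := (hLu r hr).1 htv
    ((Finset.Icc u (u + r - 1)).filter reach) (Finset.filter_subset _ _)
    ((Finset.Icc (u + r) (u + 2 * r - 1)).filter coreach) (Finset.filter_subset _ _)
    hW hY
  have hra : reach a := (Finset.mem_filter.mp ha).2
  have hcb : coreach b := (Finset.mem_filter.mp hb).2
  exact (hra.tail hab).trans hcb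
end

section
/- Let δ > 0 and let r ≥ 1 be an integer. Let A and B be disjoint finite sets with |A| = |B| = r, and let E ⊆ A × B be an edge set such that the bipartite graph (A, B, E) is a δ-expander. Let E_g ⊆ E be any subset (the green edges) and let E_red = E ∖ E_g (the red edges). If the bipartite graph (A, B, E_g) is not a 4δ-expander, then |E_red| ≥ 3δr. -/
/-- The bipartite graph `(A, B, E)` with `E ⊆ A × B` is a `δ`-expander:
any `X ⊆ A` with `|X| ≥ δ|A|` and `Y ⊆ B` with `|Y| ≥ δ|B|` are joined by an edge. -/
def BipExpander (A B : Finset ℕ) (E : Finset (ℕ × ℕ)) (δ : ℝ) : Prop :=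
  ∀ X ⊆ A, ∀ Y ⊆ B, δ * A.card ≤ (X.card : ℝ) → δ * B.card ≤ (Y.card : ℝ) →
    ∃ e ∈ E, e.1 ∈ X ∧ e.2 ∈ Y

lemma red_aux (δ : ℝ) (hδ : 0 < δ) (A B : Finset ℕ) (E Eg : Finset (ℕ × ℕ))
    (hExp : BipExpander A B E δ) :
    ∀ n : ℕ, ∀ X ⊆ A, ∀ Y ⊆ B,
      (n : ℝ) + δ * A.card ≤ X.card → (n : ℝ) + δ * B.card ≤ Y.card →
      (∀ e ∈ Eg, e.1 ∈ X → e.2 ∈ Y → False) →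
      (n + 1 : ℕ) ≤ ((E \ Eg).filter (fun e => e.1 ∈ X ∧ e.2 ∈ Y)).card := by
  intro n
  induction n with
  | zero =>
    intro X hX Y hY hXc hYc hng
    obtain ⟨e, heE, heX, heY⟩ := hExp X hX Y hY (by linarith) (by linarith)
    have : e ∈ (E \ Eg).filter (fun e => e.1 ∈ X ∧ e.2 ∈ Y) := by
      simp only [Finset.mem_filter, Finset.mem_sdiff]
      exact ⟨⟨heE, fun h => hng e h heX heY⟩, heX, heY⟩
    exact Finset.card_pos.mpr ⟨e, this⟩
  | succ n ih =>
    intro X hX Y hY hXc hYc hng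
    obtain ⟨e, heE, heX, heY⟩ := hExp X hX Y hY (by push_cast at hXc ⊢; nlinarith [mul_nonneg hδ.le (Nat.cast_nonneg A.card)]) (by push_cast at hYc ⊢; nlinarith [mul_nonneg hδ.le (Nat.cast_nonneg B.card)])
    set X' := X.erase e.1 with hX'
    set Y' := Y.erase e.2 with hY'
    have hX'c : (X'.card : ℝ) = X.card - 1 := by
      rw [hX', Finset.card_erase_of_mem heX]
      have : 1 ≤ X.card := Finset.card_pos.mpr ⟨e.1, heX⟩
      push_cast [this]; ring
    have hY'c : (Y'.card : ℝ) = Y.card - 1 := by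
      rw [hY', Finset.card_erase_of_mem heY]
      have : 1 ≤ Y.card := Finset.card_pos.mpr ⟨e.2, heY⟩
      push_cast [this]; ring
    have hIH := ih X' ((Finset.erase_subset _ _).trans hX) Y'
      ((Finset.erase_subset _ _).trans hY)
      (by rw [hX'c]; push_cast at hXc ⊢; linarith)
      (by rw [hY'c]; push_cast at hYc ⊢; linarith)
      (fun f hf h1 h2 => hng f hf (Finset.mem_of_mem_erase h1) (Finset.mem_of_mem_erase h2))
    set S := (E \ Eg).filter (fun e => e.1 ∈ X ∧ e.2 ∈ Y) with hS
    set S' := (E \ Eg).filter (fun e => e.1 ∈ X' ∧ e.2 ∈ Y') with hS'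
    have heS : e ∈ S := by
      simp only [hS, Finset.mem_filter, Finset.mem_sdiff]
      exact ⟨⟨heE, fun h => hng e h heX heY⟩, heX, heY⟩
    have heS' : e ∉ S' := by
      simp only [hS', Finset.mem_filter]
      intro ⟨_, h1, _⟩
      exact Finset.notMem_erase _ _ h1
    have hsub : insert e S' ⊆ S := by
      intro f hf
      rcases Finset.mem_insert.mp hf with rfl | hf
      · exact heS
      · simp only [hS', Finset.mem_filter] at hf
        simp only [hS, Finset.mem_filter]
        exact ⟨hf.1, Finset.mem_of_mem_erase hf.2.1, Finset.mem_of_mem_erase hf.2.2⟩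
    calc n + 1 + 1 ≤ S'.card + 1 := by omega
      _ = (insert e S').card := (Finset.card_insert_of_notMem heS').symm
      _ ≤ S.card := Finset.card_le_card hsub

/-- If `(A, B, E)` is a `δ`-expander with `|A| = |B| = r`, `E_g ⊆ E`, and
`(A, B, E_g)` is not a `4δ`-expander, then there are at least `3δr` red edges,
i.e. `|E \ E_g| ≥ 3δr`. -/
theorem red_edges_of_not_expander (δ : ℝ) (hδ : 0 < δ) (r : ℕ) (hr : 1 ≤ r)
    (A B : Finset ℕ) (hAB : Disjoint A B) (hA : A.card = r) (hB : B.card = r)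
    (E : Finset (ℕ × ℕ)) (hE : E ⊆ A ×ˢ B)
    (Eg : Finset (ℕ × ℕ)) (hEg : Eg ⊆ E)
    (hExp : BipExpander A B E δ)
    (hNot : ¬ BipExpander A B Eg (4 * δ)) :
    3 * δ * r ≤ ((E \ Eg).card : ℝ) := by
  simp only [BipExpander, not_forall] at hNot
  obtain ⟨X, hX, Y, hY, hXc, hYc, hne⟩ := hNot
  push_neg at hne
  have hng : ∀ e ∈ Eg, e.1 ∈ X → e.2 ∈ Y → False := by
    intro e he h1 h2
    exact hne e he h1 h2
  have hrpos : (0:ℝ) < r := by exact_mod_cast hr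
  have h3 : (0:ℝ) < 3 * δ * r := by positivity
  set n := ⌈3 * δ * r⌉₊ - 1 with hn
  have hceil : 1 ≤ ⌈3 * δ * r⌉₊ := Nat.one_le_iff_ne_zero.mpr (by
    simp [Nat.ceil_eq_zero, not_le, h3])
  have hn1 : (n : ℝ) + 1 = (⌈3 * δ * r⌉₊ : ℝ) := by
    rw [hn]; push_cast [hceil]; ring
  have hnlt : (n : ℝ) < 3 * δ * r := by
    have := Nat.ceil_lt_add_one h3.le (R := ℝ)
    linarith [this]
  have key := red_aux δ hδ A B E Eg hExp n X hX Y hY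
    (by rw [hA]; rw [hA] at hXc; linarith)
    (by rw [hB]; rw [hB] at hYc; linarith) hng
  have hcard : ((E \ Eg).filter (fun e => e.1 ∈ X ∧ e.2 ∈ Y)).card ≤ (E \ Eg).card :=
    Finset.card_le_card (Finset.filter_subset _ _)
  have : 3 * δ * r ≤ ((n : ℝ) + 1) := by
    rw [hn1]; exact Nat.le_ceil _
  have hkey : ((n : ℝ) + 1) ≤ ((E \ Eg).card : ℝ) := by
    exact_mod_cast le_trans key hcard
  linarith
end

section
/- Let Σ = {0,1}, let a, c ≥ 1 be integers, and let H : Σ* → Σ* be an arbitrary function. Let G be a DAG on [n] in which each node v is equipped with an ordered list parents(v) = (p_1, …, p_{d_v}) of nodes all smaller than v. Let x, x' : [n] → Σ^a and ℓ, ℓ' : [n] → Σ^c be functions such that for every node v, ℓ(v) = H(x(v) ∘ ℓ(p_1) ∘ ⋯ ∘ ℓ(p_{d_v})), where (p_1, …, p_{d_v}) = parents(v) and ∘ denotes string concatenation. Call a node v green if ℓ'(v) = H(x'(v) ∘ ℓ'(p_1) ∘ ⋯ ∘ ℓ'(p_{d_v})). Suppose v_0, v_1, …, v_m are nodes such that v_j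 ∈ parents(v_{j+1}) for every 0 ≤ j < m, every node v_j (0 ≤ j ≤ m) is green, and ℓ'(v_m) = ℓ(v_m). Then either there exist distinct strings s ≠ s' in Σ* with H(s) = H(s') (a hash collision), or for every 0 ≤ j ≤ m we have x'(v_j) = x(v_j) and ℓ'(v_j) = ℓ(v_j). -/
lemma flat_chunks_eq (c : ℕ) (hc : 1 ≤ c) :
    ∀ (L1 L2 : List (List Bool)), (∀ l ∈ L1, l.length = c) →
      (∀ l ∈ L2, l.length = c) → L1.flatten = L2.flatten → L1 = L2 := by
  intro L1
  induction L1 with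
  | nil =>
    intro L2 _ h2 hf
    cases L2 with
    | nil => rfl
    | cons b t =>
      exfalso
      simp only [List.flatten_nil, List.flatten_cons] at hf
      have hb : b.length = c := h2 b (by simp)
      have : b ++ t.flatten = ([] : List Bool) := hf.symm
      have := congrArg List.length this
      simp [hb] at this
      omega
  | cons a t ih =>
    intro L2 h1 h2 hf
    cases L2 with
    | nil =>
      exfalso
      simp only [List.flatten_cons, List.flatten_nil] at hf
      have ha : a.length = c := h1 a (by simp)
      have := congrArg List.length hf
      simp [ha] at this
      omega
    | cons b t2 =>
      simp only [List.flatten_cons] at hf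
      have hl : a.length = b.length := by
        rw [h1 a (by simp), h2 b (by simp)]
      obtain ⟨hab, hft⟩ := List.append_inj hf hl
      have := ih t2 (fun l hl => h1 l (by simp [hl])) (fun l hl => h2 l (by simp [hl])) hft
      rw [hab, this]

/-- Along a directed path of green (locally consistent) nodes whose final label
is correct, either all data values and labels on the path are correct, or a
hash collision exists. -/
theorem green_path_correct (n a c : ℕ) (ha : 1 ≤ a) (hc : 1 ≤ c)
    (H : List Bool → List Bool)
    (parents : ℕ → List ℕ)
    (hpar : ∀ v ∈ Finset.Icc 1 n, ∀ p ∈ parents v, 1 ≤ p ∧ p < v)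
    (x x' ℓ ℓ' : ℕ → List Bool)
    (hxa : ∀ v, (x v).length = a) (hx'a : ∀ v, (x' v).length = a)
    (hlc : ∀ v, (ℓ v).length = c) (hl'c : ∀ v, (ℓ' v).length = c)
    -- the honest labeling rule
    (hlab : ∀ v, ℓ v = H (x v ++ ((parents v).map ℓ).flatten))
    (m : ℕ) (vs : ℕ → ℕ)
    (hvs : ∀ j ≤ m, vs j ∈ Finset.Icc 1 n)
    -- consecutive path nodes: `vs j` is a parent of `vs (j+1)`
    (hpath : ∀ j < m, vs j ∈ parents (vs (j + 1)))
    -- every node on the path is green (locally consistent for `(x', ℓ')`)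
    (hgreen : ∀ j ≤ m, ℓ' (vs j) = H (x' (vs j) ++ ((parents (vs j)).map ℓ').flatten))
    -- the final label is correct
    (hlast : ℓ' (vs m) = ℓ (vs m)) :
    (∃ s s' : List Bool, s ≠ s' ∧ H s = H s') ∨
      (∀ j ≤ m, x' (vs j) = x (vs j) ∧ ℓ' (vs j) = ℓ (vs j)) := by
  by_cases hcol : ∃ s s' : List Bool, s ≠ s' ∧ H s = H s'
  · exact Or.inl hcol
  right
  push_neg at hcol
  have Hinj : ∀ s s' : List Bool, H s = H s' → s = s' := by
    intro s s' h
    by_contra hne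
    exact hcol s s' hne h
  -- from label correctness at j, get arg equality at j
  have key : ∀ j ≤ m, ℓ' (vs j) = ℓ (vs j) →
      x' (vs j) = x (vs j) ∧ ∀ p ∈ parents (vs j), ℓ' p = ℓ p := by
    intro j hj heq
    have hH : H (x' (vs j) ++ ((parents (vs j)).map ℓ').flatten)
        = H (x (vs j) ++ ((parents (vs j)).map ℓ).flatten) := by
      rw [← hgreen j hj, ← hlab (vs j), heq]
    have harg := Hinj _ _ hH
    have hlen : (x' (vs j)).length = (x (vs j)).length := by
      rw [hx'a, hxa]
    obtain ⟨hx, hfl⟩ := List.append_inj harg hlen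
    refine ⟨hx, ?_⟩
    have := flat_chunks_eq c hc _ _ (by simp [hl'c]) (by simp [hlc]) hfl
    exact (List.map_eq_map_iff).mp this
  -- downward induction: labels correct all along the path
  have lbl : ∀ d j, j + d = m → ℓ' (vs j) = ℓ (vs j) := by
    intro d
    induction d with
    | zero => intro j hj; simpa [← hj] using hlast
    | succ d ih =>
      intro j hj
      have hj1 : (j + 1) + d = m := by omega
      have h1 := ih (j + 1) hj1
      have := (key (j + 1) (by omega) h1).2
      exact this (vs j) (hpath j (by omega))
  intro j hj
  have hl := lbl (m - j) j (by omega)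
  exact ⟨(key j hj hl).1, hl⟩
end
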